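/- arXiv:2108.04764 — 5 statements merged into one kernel-verified Lean document; each statement's English description precedes it below -/
import Mathlib

section
/- For r ≥ 3, every edge-forcing set of the butterfly network BF(r) has cardinality at least 2^r. -/
open SimpleGraph

/-- Zero-forcing closure: `ZFForced G S v` means `v` is eventually forced
starting from the initially-forced set `S`. A forced vertex `u` whose neighbors,
with the single exception of `v`, are all forced, forces `v`. -/
inductive ZFForced {V : Type*} (G : SimpleGraph V) (S : Set V) : V → Prop
  | init {v : V} : v ∈ S → ZFForced G S v
  | force {u v : V} : ZFForced G S u → G.Adj u v →
      (∀ w, G.Adj u w → w ≠ v → ZFForced G S w) → ZFForced G S v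

/-- `S` is a zero forcing set of `G` if its closure is all of `V`. -/
def IsZeroForcingSet {V : Type*} (G : SimpleGraph V) (S : Set V) : Prop :=
  ∀ v : V, ZFForced G S v

/-- `K` is an edge-forcing set of `G`: a set of pairwise non-adjacent
(vertex-disjoint) edges of `G` whose endpoint set is a zero forcing set. -/
def IsEdgeForcingSet {V : Type*} (G : SimpleGraph V) (K : Set (Sym2 V)) : Prop :=
  K ⊆ G.edgeSet ∧
  K.Pairwise (fun e f => ∀ v : V, v ∈ e → v ∉ f) ∧
  IsZeroForcingSet G {v : V | ∃ e ∈ K, v ∈ e}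

/-- The edge-forcing number: minimum cardinality of an edge-forcing set. -/
noncomputable def edgeForcingNumber {V : Type*} (G : SimpleGraph V) : ℕ :=
  sInf {n : ℕ | ∃ K : Set (Sym2 V), IsEdgeForcingSet G K ∧ K.ncard = n}

/-- The `r`-dimensional butterfly network: vertices `(w, i)` with
`w : Fin r → Bool` and level `i : Fin (r+1)`; `(w,i)` is adjacent to `(w',i+1)`
iff `w = w'` or `w` and `w'` differ exactly in bit `i+1` (index `i`, 0-based). -/
def butterfly (r : ℕ) : SimpleGraph ((Fin r → Bool) × Fin (r + 1)) :=
  SimpleGraph.fromRel (fun p q =>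
    (p.2 : ℕ) + 1 = (q.2 : ℕ) ∧
      (p.1 = q.1 ∨ ∀ k : Fin r, (p.1 k ≠ q.1 k ↔ (k : ℕ) = (p.2 : ℕ))))

lemma core {V : Type*} (G : SimpleGraph V) (S : Set V) (a b c d : V)
    (hab : a ≠ b) (ha : a ∉ S) (hb : b ∉ S)
    (hNa : ∀ u, G.Adj u a → u = c ∨ u = d)
    (hNb : ∀ u, G.Adj u b → u = c ∨ u = d)
    (hca : G.Adj c a) (hcb : G.Adj c b) (hda : G.Adj d a) (hdb : G.Adj d b) :
    ¬ ZFForced G S a := by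
  have main : ∀ v, ZFForced G S v → v ≠ a ∧ v ≠ b := by
    intro v h
    induction h with
    | init hv => exact ⟨fun h => ha (h ▸ hv), fun h => hb (h ▸ hv)⟩
    | @force u v hu hadj hall ihu ihall =>
      constructor
      · rintro rfl
        rcases hNa u hadj with rfl | rfl
        · exact (ihall b hcb (Ne.symm hab)).2 rfl
        · exact (ihall b hdb (Ne.symm hab)).2 rfl
      · rintro rfl
        rcases hNb u hadj with rfl | rfl
        · exact (ihall a hca hab).1 rfl
        · exact (ihall a hda hab).1 rfl
  exact fun h => (main a h).1 rfl

lemma edge_of_endpoint {V : Type*} {G : SimpleGraph V} {K : Set (Sym2 V)}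
    (hKE : K ⊆ G.edgeSet) {z c d : V}
    (hNz : ∀ u, G.Adj u z → u = c ∨ u = d)
    (hz : ∃ e ∈ K, z ∈ e) :
    ∃ e ∈ K, ∀ v, v ∈ e → v = z ∨ v = c ∨ v = d := by
  obtain ⟨e, heK, hze⟩ := hz
  refine ⟨e, heK, ?_⟩
  have hedge : e ∈ G.edgeSet := hKE heK
  induction e using Sym2.ind with
  | _ x y =>
    rw [Sym2.mem_iff] at hze
    intro v hv
    rw [Sym2.mem_iff] at hv
    rw [SimpleGraph.mem_edgeSet] at hedge
    rcases hze with rfl | rfl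
    · rcases hv with rfl | rfl
      · exact Or.inl rfl
      · exact Or.inr (hNz v hedge.symm)
    · rcases hv with rfl | rfl
      · exact Or.inr (hNz v hedge)
      · exact Or.inl rfl

lemma cycle_edge {V : Type*} {G : SimpleGraph V} {K : Set (Sym2 V)}
    (hK : IsEdgeForcingSet G K) (a b c d : V)
    (hab : a ≠ b)
    (hNa : ∀ u, G.Adj u a → u = c ∨ u = d)
    (hNb : ∀ u, G.Adj u b → u = c ∨ u = d)
    (hca : G.Adj c a) (hcb : G.Adj c b) (hda : G.Adj d a) (hdb : G.Adj d b) :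
    ∃ e ∈ K, ∀ v, v ∈ e → v = a ∨ v = b ∨ v = c ∨ v = d := by
  obtain ⟨hKE, _hpw, hZF⟩ := hK
  set S : Set V := {v : V | ∃ e ∈ K, v ∈ e} with hS
  by_cases haS : a ∈ S
  · obtain ⟨e, he, hall⟩ := edge_of_endpoint hKE hNa haS
    exact ⟨e, he, fun v hv => by rcases hall v hv with h|h|h <;> simp [h]⟩
  by_cases hbS : b ∈ S
  · obtain ⟨e, he, hall⟩ := edge_of_endpoint hKE hNb hbS
    exact ⟨e, he, fun v hv => by rcases hall v hv with h|h|h <;> simp [h]⟩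
  exact absurd (hZF a) (core G S a b c d hab haS hbS hNa hNb hca hcb hda hdb)

def flipb {r : ℕ} (i : Fin r) (w : Fin r → Bool) : Fin r → Bool :=
  fun k => if k = i then !(w k) else w k
lemma flipb_ne {r : ℕ} (i : Fin r) (w : Fin r → Bool) {k : Fin r} (h : k ≠ i) :
    flipb i w k = w k := by simp [flipb, h]

lemma flipb_flipb {r : ℕ} (i : Fin r) (w : Fin r → Bool) : flipb i (flipb i w) = w := by
  funext k
  by_cases h : k = i <;> simp [flipb, h]

lemma flipb_ne_self {r : ℕ} (i : Fin r) (w : Fin r → Bool) : flipb i w ≠ w := by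
  intro h
  have := congrFun h i
  simp [flipb] at this

lemma butterfly_adj {r : ℕ} (p q : (Fin r → Bool) × Fin (r + 1)) :
    (butterfly r).Adj p q ↔ p ≠ q ∧
      (((p.2 : ℕ) + 1 = (q.2 : ℕ) ∧
        (p.1 = q.1 ∨ ∀ k : Fin r, (p.1 k ≠ q.1 k ↔ (k : ℕ) = (p.2 : ℕ)))) ∨
       ((q.2 : ℕ) + 1 = (p.2 : ℕ) ∧
        (q.1 = p.1 ∨ ∀ k : Fin r, (q.1 k ≠ p.1 k ↔ (k : ℕ) = (q.2 : ℕ))))) := by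
  rfl

lemma bool_flip {x y : Bool} (h : ¬ x = y) : y = !x := by
  revert h; cases x <;> cases y <;> simp

lemma nbr_bot {r : ℕ} (hr : 1 ≤ r) (w : Fin r → Bool)
    (u : (Fin r → Bool) × Fin (r + 1))
    (h : (butterfly r).Adj u (w, ⟨0, by omega⟩)) :
    u = (w, ⟨1, by omega⟩) ∨ u = (flipb ⟨0, by omega⟩ w, ⟨1, by omega⟩) := by
  obtain ⟨u1, u2⟩ := u
  rw [butterfly_adj] at h
  obtain ⟨hne, h | h⟩ := h
  · exact absurd h.1 (by simp)
  · obtain ⟨hlev, hbit⟩ := h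
    simp only at hlev hbit
    have hu2 : u2 = (⟨1, by omega⟩ : Fin (r+1)) := by
      apply Fin.ext; simp at hlev ⊢; omega
    rcases hbit with h1 | h1
    · left; rw [← h1]; exact congrArg _ hu2
    · right
      have hfun : u1 = flipb ⟨0, by omega⟩ w := by
        funext k
        by_cases hk : k = (⟨0, by omega⟩ : Fin r)
        · have hne' : ¬ w k = u1 k := (h1 k).mpr (by simp [hk])
          rw [flipb, if_pos hk]
          exact bool_flip hne'
        · have heq : w k = u1 k := by
            by_contra hc
            exact hk (Fin.ext (by simpa using (h1 k).mp hc))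
          rw [flipb_ne _ _ hk, ← heq]
      rw [hfun]; exact congrArg _ hu2

lemma nbr_top {r : ℕ} (hr : 1 ≤ r) (w : Fin r → Bool)
    (u : (Fin r → Bool) × Fin (r + 1))
    (h : (butterfly r).Adj u (w, ⟨r, by omega⟩)) :
    u = (w, ⟨r - 1, by omega⟩) ∨ u = (flipb ⟨r - 1, by omega⟩ w, ⟨r - 1, by omega⟩) := by
  obtain ⟨u1, u2⟩ := u
  rw [butterfly_adj] at h
  obtain ⟨hne, h | h⟩ := h
  · obtain ⟨hlev, hbit⟩ := h
    simp only at hlev hbit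
    have hu2 : u2 = (⟨r - 1, by omega⟩ : Fin (r+1)) := by
      apply Fin.ext; simp at hlev ⊢; omega
    have hval : (u2 : ℕ) = r - 1 := by rw [hu2]
    rcases hbit with h1 | h1
    · left; rw [h1]; exact congrArg _ hu2
    · right
      have hfun : u1 = flipb ⟨r - 1, by omega⟩ w := by
        funext k
        by_cases hk : k = (⟨r - 1, by omega⟩ : Fin r)
        · have hne' : ¬ w k = u1 k := fun hc => ((h1 k).mpr (by simp [hk, hval])) hc.symm
          rw [flipb, if_pos hk]
          exact bool_flip hne'
        · have heq : w k = u1 k := by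
            by_contra hc
            have := (h1 k).mp (fun hc2 => hc hc2.symm)
            rw [hval] at this
            exact hk (Fin.ext (by simpa using this))
          rw [flipb_ne _ _ hk, ← heq]
      rw [hfun]; exact congrArg _ hu2
  · exact absurd h.1 (by have := u2.isLt; simp; omega)

lemma adj_straight {r : ℕ} (w : Fin r → Bool) (l l' : Fin (r + 1))
    (h : (l : ℕ) + 1 = (l' : ℕ)) : (butterfly r).Adj (w, l) (w, l') := by
  rw [butterfly_adj]
  refine ⟨?_, Or.inl ⟨h, Or.inl rfl⟩⟩
  intro hc
  have : l = l' := congrArg Prod.snd hc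
  subst this; omega

lemma adj_cross {r : ℕ} (w : Fin r → Bool) (l l' : Fin (r + 1)) (i : Fin r)
    (h : (l : ℕ) + 1 = (l' : ℕ)) (hi : (i : ℕ) = (l : ℕ)) :
    (butterfly r).Adj (w, l) (flipb i w, l') := by
  rw [butterfly_adj]
  refine ⟨?_, Or.inl ⟨h, Or.inr ?_⟩⟩
  · intro hc
    have : l = l' := congrArg Prod.snd hc
    subst this; omega
  · intro k
    show w k ≠ flipb i w k ↔ (k : ℕ) = (l : ℕ)
    by_cases hk : k = i
    · subst hk
      simp [flipb, hi]
    · rw [flipb_ne _ _ hk]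
      simp only [ne_eq, not_true_eq_false, false_iff]
      exact fun hc => hk (Fin.ext (by omega))

lemma sym2_exists_mem {α : Type*} (e : Sym2 α) : ∃ v, v ∈ e := by
  induction e using Sym2.ind with
  | _ x y => exact ⟨x, Sym2.mem_mk_left x y⟩

lemma bot_edge {r : ℕ} (hr : 3 ≤ r) {K : Set (Sym2 ((Fin r → Bool) × Fin (r + 1)))}
    (hK : IsEdgeForcingSet (butterfly r) K) (w : Fin r → Bool) :
    ∃ e ∈ K, ∀ v, v ∈ e →
      ((v.2 : ℕ) ≤ 1 ∧ (v.1 = w ∨ v.1 = flipb ⟨0, by omega⟩ w)) := by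
  set i0 : Fin r := ⟨0, by omega⟩ with hi0
  set l0 : Fin (r + 1) := ⟨0, by omega⟩ with hl0
  set l1 : Fin (r + 1) := ⟨1, by omega⟩ with hl1
  have hab : ((w, l0) : (Fin r → Bool) × Fin (r+1)) ≠ (flipb i0 w, l0) :=
    fun h => flipb_ne_self i0 w (congrArg Prod.fst h).symm
  have hNa : ∀ u, (butterfly r).Adj u (w, l0) → u = (w, l1) ∨ u = (flipb i0 w, l1) :=
    fun u hu => nbr_bot (by omega) w u hu
  have hNb : ∀ u, (butterfly r).Adj u (flipb i0 w, l0) →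
      u = (w, l1) ∨ u = (flipb i0 w, l1) := by
    intro u hu
    rcases nbr_bot (by omega) (flipb i0 w) u hu with h | h
    · exact Or.inr h
    · rw [flipb_flipb] at h
      exact Or.inl h
  have hca : (butterfly r).Adj (w, l1) (w, l0) := (adj_straight w l0 l1 rfl).symm
  have hcb : (butterfly r).Adj (w, l1) (flipb i0 w, l0) := by
    have h := adj_cross (flipb i0 w) l0 l1 i0 rfl rfl
    rw [flipb_flipb] at h
    exact h.symm
  have hda : (butterfly r).Adj (flipb i0 w, l1) (w, l0) :=
    (adj_cross w l0 l1 i0 rfl rfl).symm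
  have hdb : (butterfly r).Adj (flipb i0 w, l1) (flipb i0 w, l0) :=
    (adj_straight (flipb i0 w) l0 l1 rfl).symm
  obtain ⟨e, heK, hall⟩ := cycle_edge hK (w, l0) (flipb i0 w, l0) (w, l1) (flipb i0 w, l1)
    hab hNa hNb hca hcb hda hdb
  refine ⟨e, heK, fun v hv => ?_⟩
  rcases hall v hv with rfl | rfl | rfl | rfl <;> simp [hl0, hl1]

lemma top_edge {r : ℕ} (hr : 3 ≤ r) {K : Set (Sym2 ((Fin r → Bool) × Fin (r + 1)))}
    (hK : IsEdgeForcingSet (butterfly r) K) (w : Fin r → Bool) :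
    ∃ e ∈ K, ∀ v, v ∈ e →
      (r - 1 ≤ (v.2 : ℕ) ∧ (v.1 = w ∨ v.1 = flipb ⟨r - 1, by omega⟩ w)) := by
  set i1 : Fin r := ⟨r - 1, by omega⟩ with hi1
  set lr1 : Fin (r + 1) := ⟨r - 1, by omega⟩ with hlr1
  set lr : Fin (r + 1) := ⟨r, by omega⟩ with hlr
  have hstep : (lr1 : ℕ) + 1 = (lr : ℕ) := by simp [hlr1, hlr]; omega
  have hbit : (i1 : ℕ) = (lr1 : ℕ) := rfl
  have hab : ((w, lr) : (Fin r → Bool) × Fin (r+1)) ≠ (flipb i1 w, lr) :=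
    fun h => flipb_ne_self i1 w (congrArg Prod.fst h).symm
  have hNa : ∀ u, (butterfly r).Adj u (w, lr) → u = (w, lr1) ∨ u = (flipb i1 w, lr1) :=
    fun u hu => nbr_top (by omega) w u hu
  have hNb : ∀ u, (butterfly r).Adj u (flipb i1 w, lr) →
      u = (w, lr1) ∨ u = (flipb i1 w, lr1) := by
    intro u hu
    rcases nbr_top (by omega) (flipb i1 w) u hu with h | h
    · exact Or.inr h
    · rw [flipb_flipb] at h
      exact Or.inl h
  have hca : (butterfly r).Adj (w, lr1) (w, lr) := adj_straight w lr1 lr hstep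
  have hcb : (butterfly r).Adj (w, lr1) (flipb i1 w, lr) := adj_cross w lr1 lr i1 hstep hbit
  have hda : (butterfly r).Adj (flipb i1 w, lr1) (w, lr) := by
    have h := adj_cross (flipb i1 w) lr1 lr i1 hstep hbit
    rw [flipb_flipb] at h
    exact h
  have hdb : (butterfly r).Adj (flipb i1 w, lr1) (flipb i1 w, lr) :=
    adj_straight (flipb i1 w) lr1 lr hstep
  obtain ⟨e, heK, hall⟩ := cycle_edge hK (w, lr) (flipb i1 w, lr) (w, lr1) (flipb i1 w, lr1)
    hab hNa hNb hca hcb hda hdb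
  refine ⟨e, heK, fun v hv => ?_⟩
  rcases hall v hv with rfl | rfl | rfl | rfl <;> simp [hlr1, hlr]

lemma pair_eq {r : ℕ} (i : Fin r) (w w' : Fin r → Bool) (h : w i = false) (h' : w' i = false)
    (hc : w = w' ∨ w = flipb i w' ∨ flipb i w = w' ∨ flipb i w = flipb i w') : w = w' := by
  rcases hc with hc | hc | hc | hc
  · exact hc
  · have := congrFun hc i
    rw [h, flipb, if_pos rfl, h'] at this
    exact absurd this (by simp)
  · have := congrFun hc i
    rw [h', flipb, if_pos rfl, h] at this
    exact absurd this (by simp)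
  · have := congrArg (flipb i) hc
    rwa [flipb_flipb, flipb_flipb] at this

theorem edgeForcing_BF_lower_bound (r : ℕ) (hr : 3 ≤ r)
    (K : Set (Sym2 ((Fin r → Bool) × Fin (r + 1))))
    (hK : IsEdgeForcingSet (butterfly r) K) :
    2 ^ r ≤ K.ncard := by
  classical
  set i0 : Fin r := ⟨0, by omega⟩ with hi0def
  set i1 : Fin r := ⟨r - 1, by omega⟩ with hi1def
  have hi01 : i0 ≠ i1 := by
    intro h
    have : (0 : ℕ) = r - 1 := congrArg Fin.val h
    omega
  set σ : (Fin r → Bool) → (Fin r → Bool) :=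
    fun w k => if k = i1 then false else if k = i0 then w i1 else w k with hσdef
  have hσi1 : ∀ w, σ w i1 = false := fun w => by simp [hσdef]
  have hσi0 : ∀ w, σ w i0 = w i1 := fun w => by simp [hσdef, hi01]
  have hσk : ∀ w k, k ≠ i0 → k ≠ i1 → σ w k = w k := fun w k h0 h1 => by
    simp [hσdef, h0, h1]
  have hσinj : ∀ w w', w i0 = true → w' i0 = true → σ w = σ w' → w = w' := by
    intro w w' h h' hs
    funext k
    by_cases hk1 : k = i1
    · subst hk1
      have := congrFun hs i0
      rwa [hσi0, hσi0] at this
    by_cases hk0 : k = i0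
    · subst hk0; rw [h, h']
    · have := congrFun hs k
      rwa [hσk w k hk0 hk1, hσk w' k hk0 hk1] at this
  choose eb hebK heb using fun w => bot_edge hr hK w
  choose et hetK het using fun w => top_edge hr hK w
  set f : (Fin r → Bool) → Sym2 ((Fin r → Bool) × Fin (r + 1)) :=
    fun w => if w i0 = false then eb w else et (σ w) with hfdef
  have hfK : ∀ w, f w ∈ K := by
    intro w
    simp only [hfdef]
    split
    · exact hebK w
    · exact hetK (σ w)
  have hinj : Function.Injective f := by
    intro w w' hf
    simp only [hfdef] at hf
    by_cases h : w i0 = false <;> by_cases h' : w' i0 = false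
    · rw [if_pos h, if_pos h'] at hf
      obtain ⟨v, hv⟩ := sym2_exists_mem (eb w)
      have s1 := heb w v hv
      have s2 := heb w' v (hf ▸ hv)
      exact pair_eq i0 w w' h h' (by
        rcases s1.2 with e1 | e1 <;> rcases s2.2 with e2 | e2
        · exact Or.inl (e1.symm.trans e2)
        · exact Or.inr (Or.inl (e1.symm.trans e2))
        · exact Or.inr (Or.inr (Or.inl (e1.symm.trans e2)))
        · exact Or.inr (Or.inr (Or.inr (e1.symm.trans e2))))
    · rw [if_pos h, if_neg h'] at hf
      obtain ⟨v, hv⟩ := sym2_exists_mem (eb w)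
      have s1 := heb w v hv
      have s2 := het (σ w') v (hf ▸ hv)
      exact absurd s2.1 (by omega)
    · rw [if_neg h, if_pos h'] at hf
      obtain ⟨v, hv⟩ := sym2_exists_mem (et (σ w))
      have s1 := het (σ w) v hv
      have s2 := heb w' v (hf ▸ hv)
      exact absurd s1.1 (by omega)
    · rw [if_neg h, if_neg h'] at hf
      obtain ⟨v, hv⟩ := sym2_exists_mem (et (σ w))
      have s1 := het (σ w) v hv
      have s2 := het (σ w') v (hf ▸ hv)
      have hb : w i0 = true := by revert h; cases w i0 <;> simp
      have hb' : w' i0 = true := by revert h'; cases w' i0 <;> simp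
      refine hσinj w w' hb hb' (pair_eq i1 (σ w) (σ w') (hσi1 w) (hσi1 w') ?_)
      rcases s1.2 with e1 | e1 <;> rcases s2.2 with e2 | e2
      · exact Or.inl (e1.symm.trans e2)
      · exact Or.inr (Or.inl (e1.symm.trans e2))
      · exact Or.inr (Or.inr (Or.inl (e1.symm.trans e2)))
      · exact Or.inr (Or.inr (Or.inr (e1.symm.trans e2)))
  set F : Finset (Sym2 ((Fin r → Bool) × Fin (r + 1))) := Finset.image f Finset.univ with hFdef
  have hFcard : F.card = 2 ^ r := by
    rw [hFdef, Finset.card_image_of_injective _ hinj, Finset.card_univ]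
    simp
  have hsub : (F : Set (Sym2 ((Fin r → Bool) × Fin (r + 1)))) ⊆ K := by
    intro e he
    rw [Finset.mem_coe, hFdef, Finset.mem_image] at he
    obtain ⟨w, _, rfl⟩ := he
    exact hfK w
  calc 2 ^ r = F.card := hFcard.symm
    _ = (F : Set (Sym2 ((Fin r → Bool) × Fin (r + 1)))).ncard := (Set.ncard_coe_finset F).symm
    _ ≤ K.ncard := Set.ncard_le_ncard hsub (Set.toFinite K)
end

section
/- For every odd r ≥ 3, the edge-forcing number of the butterfly network BF(r) satisfies ζ_e(BF(r)) ≤ ⌈r/2⌉ · 2^(r-1). -/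
open SimpleGraph
set_option maxHeartbeats 1600000

namespace EFaux

abbrev V (r : ℕ) := (Fin r → Bool) × Fin (r + 1)

def sBit (r i : ℕ) : ℕ := min (2 * (i / 2)) (r - 1)

lemma sBit_lt {r : ℕ} (hr : 0 < r) (i : ℕ) : sBit r i < r := by
  unfold sBit; omega

lemma sBit_even {r i : ℕ} (hodd : Odd r) (h2 : i % 2 = 0) (hle : i ≤ r) :
    sBit r i = i := by
  obtain ⟨m, hm⟩ := hodd; unfold sBit; omega

lemma sBit_odd {r i : ℕ} (hodd : Odd r) (h2 : i % 2 = 1) (hle : i ≤ r) :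
    sBit r i = i - 1 := by
  obtain ⟨m, hm⟩ := hodd; unfold sBit; omega

def flip {r : ℕ} (w : Fin r → Bool) (k : Fin r) : Fin r → Bool :=
  Function.update w k (!(w k))

@[simp] lemma flip_self {r : ℕ} (w : Fin r → Bool) (k : Fin r) :
    flip w k k = !(w k) := by simp [flip]

lemma flip_ne {r : ℕ} (w : Fin r → Bool) (k j : Fin r) (h : j ≠ k) :
    flip w k j = w j := by simp [flip, Function.update_of_ne h]

@[simp] lemma flip_flip {r : ℕ} (w : Fin r → Bool) (k : Fin r) :
    flip (flip w k) k = w := by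
  funext j
  by_cases h : j = k
  · subst h; simp [flip]
  · rw [flip_ne _ _ _ h, flip_ne _ _ _ h]

lemma flip_iff {r : ℕ} {w w' : Fin r → Bool} {i : ℕ} (hi : i < r) :
    (∀ k : Fin r, (w k ≠ w' k ↔ (k : ℕ) = i)) ↔ w' = flip w ⟨i, hi⟩ := by
  constructor
  · intro h
    funext k
    by_cases hk : (k : ℕ) = i
    · have hkk : k = ⟨i, hi⟩ := Fin.ext hk
      have hne := (h k).mpr hk
      rw [hkk] at hne ⊢
      rw [flip_self]
      revert hne
      cases w ⟨i, hi⟩ <;> cases w' ⟨i, hi⟩ <;> simp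
    · have hkk : k ≠ ⟨i, hi⟩ := fun hh => hk (by rw [hh])
      rw [flip_ne _ _ _ hkk]
      have := h k
      by_contra hne
      exact hk (this.mp (Ne.symm hne))
  · intro h k
    subst h
    by_cases hk : (k : ℕ) = i
    · have hkk : k = ⟨i, hi⟩ := Fin.ext hk
      rw [hkk, flip_self]
      simp only [hk, iff_true]
      cases w ⟨i, hi⟩ <;> simp
    · have hkk : k ≠ ⟨i, hi⟩ := fun hh => hk (by rw [hh])
      rw [flip_ne _ _ _ hkk]
      simp [hk]

lemma adj_iff {r : ℕ} {p q : V r} : (butterfly r).Adj p q ↔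
    ((q.2 : ℕ) = (p.2 : ℕ) + 1 ∧
      (q.1 = p.1 ∨ ∃ h : (p.2 : ℕ) < r, q.1 = flip p.1 ⟨(p.2 : ℕ), h⟩)) ∨
    ((p.2 : ℕ) = (q.2 : ℕ) + 1 ∧
      (p.1 = q.1 ∨ ∃ h : (q.2 : ℕ) < r, p.1 = flip q.1 ⟨(q.2 : ℕ), h⟩)) := by
  constructor
  · rintro ⟨hne, hrel | hrel⟩
    · left
      obtain ⟨hl, hw⟩ := hrel
      have h2 : (p.2 : ℕ) < r := by have := q.2.isLt; omega
      refine ⟨hl.symm, ?_⟩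
      rcases hw with hw | hw
      · exact Or.inl hw.symm
      · exact Or.inr ⟨h2, (flip_iff h2).mp hw⟩
    · right
      obtain ⟨hl, hw⟩ := hrel
      have h2 : (q.2 : ℕ) < r := by have := p.2.isLt; omega
      refine ⟨hl.symm, ?_⟩
      rcases hw with hw | hw
      · exact Or.inl hw.symm
      · exact Or.inr ⟨h2, (flip_iff h2).mp hw⟩
  · rintro (⟨hl, hw⟩ | ⟨hl, hw⟩)
    · have hne : p ≠ q := by
        intro h; subst h; omega
      refine ⟨hne, Or.inl ⟨hl.symm, ?_⟩⟩
      rcases hw with hw | ⟨h2, hw⟩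
      · exact Or.inl hw.symm
      · exact Or.inr ((flip_iff h2).mpr hw)
    · have hne : p ≠ q := by
        intro h; subst h; omega
      refine ⟨hne, Or.inr ⟨hl.symm, ?_⟩⟩
      rcases hw with hw | ⟨h2, hw⟩
      · exact Or.inl hw.symm
      · exact Or.inr ((flip_iff h2).mpr hw)

def S (r : ℕ) (hr : 0 < r) : Set (V r) :=
  {p | p.1 ⟨sBit r (p.2 : ℕ), sBit_lt hr _⟩ = false}

section Forcing

variable {r : ℕ} (hodd : Odd r) (hr : 0 < r)

include hodd

/-- Odd levels are all forced (upward sweep). -/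
lemma forced_odd : ∀ (j : ℕ) (_hj : 2 * j + 1 ≤ r) (w : Fin r → Bool),
    ZFForced (butterfly r) (S r hr) (w, ⟨2 * j + 1, by omega⟩) := by
  intro j
  induction j with
  | zero =>
    intro _hj w
    by_cases hw : w ⟨0, hr⟩ = false
    · apply ZFForced.init
      show w ⟨sBit r 1, _⟩ = false
      have h1 : sBit r 1 = 0 := sBit_odd hodd (by norm_num) (by omega)
      simpa [h1] using hw
    · -- forced by (flip w 0, 0)
      have hw' : w ⟨0, hr⟩ = true := by revert hw; cases w ⟨0, hr⟩ <;> simp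
      set k : Fin r := ⟨0, hr⟩ with hk
      set u : V r := (flip w k, ⟨0, by omega⟩) with hu
      set v : V r := (w, ⟨2 * 0 + 1, by omega⟩) with hv
      have hadj : (butterfly r).Adj u v := by
        rw [adj_iff]
        left
        refine ⟨by simp [hu, hv], Or.inr ⟨by show (0:ℕ) < r; exact hr, ?_⟩⟩
        show w = flip (flip w k) ⟨0, _⟩
        rw [show (⟨0, _⟩ : Fin r) = k from rfl, flip_flip]
      apply ZFForced.force (u := u) ?_ hadj
      · rintro x hx hxv
        rw [adj_iff] at hx
        rcases hx with ⟨hl, hw1⟩ | ⟨hl, hw1⟩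
        · -- x at level 1
          rcases hw1 with hw1 | ⟨h2, hw1⟩
          · -- x = (flip w k, 1) ∈ S
            apply ZFForced.init
            show x.1 ⟨sBit r (x.2 : ℕ), _⟩ = false
            have h1 : sBit r (x.2 : ℕ) = 0 := by
              rw [show ((x.2 : ℕ)) = 1 by simpa [hu] using hl]
              exact sBit_odd hodd (by norm_num) (by omega)
            have : x.1 ⟨0, hr⟩ = false := by
              rw [hw1]; simp [hu, hk, hw']; exact hw'
            simpa [h1] using this
          · -- x = (w, 1) = v, contradiction
            exfalso
            apply hxv
            have hx1 : x.1 = w := by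
              rw [hw1]
              show flip (flip w k) _ = w
              rw [show (⟨(u.2:ℕ), h2⟩ : Fin r) = k from Fin.ext (by simp [hu, hk]), flip_flip]
            have hu2 : (u.2 : ℕ) = 0 := rfl
            have hv2 : (v.2 : ℕ) = 2 * 0 + 1 := rfl
            have hx2 : x.2 = v.2 := Fin.ext (by omega)
            exact Prod.ext hx1 hx2
        · -- x below level 0: impossible
          exfalso
          simp [hu] at hl
      · apply ZFForced.init
        rw [hu]
        simp only [S, Set.mem_setOf_eq]
        show flip w k ⟨sBit r (0:ℕ), sBit_lt hr 0⟩ = false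
        have h0 : sBit r 0 = 0 := sBit_even hodd (by norm_num) (by omega)
        have : (⟨sBit r 0, sBit_lt hr 0⟩ : Fin r) = k := Fin.ext (by simp [h0, hk])
        rw [this]
        simp [hw']
  | succ j ih =>
    intro hj w
    have hjr : 2 * j + 1 ≤ r := by omega
    by_cases hw : w ⟨2 * (j+1), by omega⟩ = false
    · apply ZFForced.init
      show w ⟨sBit r (2*(j+1)+1), _⟩ = false
      have h1 : sBit r (2*(j+1)+1) = 2*(j+1) :=  by
        rw [sBit_odd hodd (by omega) (by omega)]; omega
      have : (⟨sBit r (2*(j+1)+1), sBit_lt hr _⟩ : Fin r) = ⟨2*(j+1), by omega⟩ := Fin.ext h1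
      rw [this]; exact hw
    · have hw' : w ⟨2 * (j+1), by omega⟩ = true := by
        revert hw; cases w ⟨2 * (j+1), by omega⟩ <;> simp
      set k : Fin r := ⟨2*(j+1), by omega⟩ with hk
      set u : V r := (flip w k, ⟨2*(j+1), by omega⟩) with hu
      set v : V r := (w, ⟨2 * (j+1) + 1, by omega⟩) with hv
      have hadj : (butterfly r).Adj u v := by
        rw [adj_iff]
        left
        refine ⟨by simp [hu, hv], Or.inr ⟨by show 2*(j+1) < r; omega, ?_⟩⟩
        show w = flip (flip w k) ⟨(u.2 : ℕ), _⟩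
        rw [show (⟨(u.2 : ℕ), _⟩ : Fin r) = k from Fin.ext (by simp [hu, hk]), flip_flip]
      apply ZFForced.force (u := u) ?_ hadj
      · rintro x hx hxv
        rw [adj_iff] at hx
        rcases hx with ⟨hl, hw1⟩ | ⟨hl, hw1⟩
        · -- x at level 2(j+1)+1
          rcases hw1 with hw1 | ⟨h2, hw1⟩
          · apply ZFForced.init
            show x.1 ⟨sBit r (x.2 : ℕ), _⟩ = false
            have hxl : (x.2 : ℕ) = 2*(j+1)+1 := by simpa [hu] using hl
            have h1 : sBit r (x.2 : ℕ) = 2*(j+1) := by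
              rw [hxl, sBit_odd hodd (by omega) (by omega)]; omega
            have : (⟨sBit r (x.2:ℕ), sBit_lt hr _⟩ : Fin r) = k := Fin.ext (by simp [h1, hk])
            rw [this, hw1]
            simp [hu, hk, hw']
            exact hw'
          · exfalso
            apply hxv
            have hx1 : x.1 = w := by
              rw [hw1]
              show flip (flip w k) _ = w
              rw [show (⟨(u.2:ℕ), h2⟩ : Fin r) = k from Fin.ext (by simp [hu, hk]), flip_flip]
            have hx2 : x.2 = v.2 := Fin.ext (by simp [hv, hu] at hl ⊢; omega)
            exact Prod.ext hx1 hx2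
        · -- x at level 2j+1 : forced by ih
          have hxl : (x.2 : ℕ) = 2*j+1 := by simp [hu] at hl; omega
          have hxeq : x = (x.1, (⟨2*j+1, by omega⟩ : Fin (r+1))) :=
            Prod.ext rfl (Fin.ext hxl)
          rw [hxeq]
          exact ih hjr x.1
      · apply ZFForced.init
        show flip w k ⟨sBit r (2*(j+1) : ℕ), _⟩ = false
        have h0 : sBit r (2*(j+1)) = 2*(j+1) := sBit_even hodd (by omega) (by omega)
        have : (⟨sBit r (2*(j+1)), sBit_lt hr _⟩ : Fin r) = k := Fin.ext (by simp [h0, hk])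
        rw [this]
        simp [hw']

/-- Even levels are all forced (downward sweep), level r-1-2t. -/
lemma forced_even : ∀ (t : ℕ) (_ht : 2 * t ≤ r - 1) (w : Fin r → Bool),
    ZFForced (butterfly r) (S r hr) (w, ⟨r - 1 - 2 * t, by omega⟩) := by
  intro t
  induction t with
  | zero =>
    intro _ht w
    have hE : ((w, ⟨r - 1 - 2 * 0, by omega⟩) : V r) = (w, ⟨r - 1, by omega⟩) :=
      Prod.ext rfl (Fin.ext (by show r - 1 - 2 * 0 = r - 1; omega))
    rw [hE]
    have hrm : (r - 1) % 2 = 0 := by obtain ⟨m, hm⟩ := hodd; omega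
    by_cases hw : w ⟨r - 1, by omega⟩ = false
    · apply ZFForced.init
      show w ⟨sBit r (r-1), sBit_lt hr _⟩ = false
      have h1 : sBit r (r-1) = r-1 := sBit_even hodd hrm (by omega)
      have : (⟨sBit r (r-1), sBit_lt hr _⟩ : Fin r) = ⟨r-1, by omega⟩ := Fin.ext h1
      rw [this]; exact hw
    · have hw' : w ⟨r - 1, by omega⟩ = true := by
        revert hw; cases w ⟨r - 1, by omega⟩ <;> simp
      set k : Fin r := ⟨r - 1, by omega⟩ with hk
      set u : V r := (flip w k, ⟨r, by omega⟩) with hu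
      set v : V r := (w, ⟨r - 1, by omega⟩) with hv
      have hadj : (butterfly r).Adj u v := by
        rw [adj_iff]
        right
        refine ⟨by show r = r - 1 + 1; omega, Or.inr ⟨by show r - 1 < r; omega, ?_⟩⟩
        rfl
      apply ZFForced.force (u := u) ?_ hadj
      · rintro x hx hxv
        rw [adj_iff] at hx
        rcases hx with ⟨hl, hw1⟩ | ⟨hl, hw1⟩
        · exfalso
          have h1 : (u.2 : ℕ) = r := rfl
          have := x.2.isLt; omega
        · -- x at level r-1
          have hxl : (x.2 : ℕ) = r - 1 := by
            have h1 : (u.2 : ℕ) = r := rfl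
            omega
          rcases hw1 with hw1 | ⟨h2, hw1⟩
          · -- x.1 = u.1 = flip w k : in S
            apply ZFForced.init
            show x.1 ⟨sBit r (x.2 : ℕ), sBit_lt hr _⟩ = false
            have h1 : sBit r (x.2 : ℕ) = r - 1 := by
              rw [hxl]; exact sBit_even hodd hrm (by omega)
            have : (⟨sBit r (x.2:ℕ), sBit_lt hr _⟩ : Fin r) = k := Fin.ext (by simp [h1, hk])
            rw [this, ← hw1]
            simp [hu, hk, hw']
            exact hw'
          · -- u.1 = flip x.1 ; then x = v
            exfalso
            apply hxv
            have hkx : (⟨(x.2 : ℕ), h2⟩ : Fin r) = k := Fin.ext (by simp [hxl, hk])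
            rw [hkx] at hw1
            have hx1 : x.1 = w := by
              have h3 : flip u.1 k = x.1 := by rw [hw1, flip_flip]
              rw [← h3]
              show flip (flip w k) k = w
              rw [flip_flip]
            have hx2 : x.2 = v.2 := Fin.ext (by show (x.2:ℕ) = r - 1; omega)
            exact Prod.ext hx1 hx2
      · -- u itself in S : bit (r-1) of flip w k is false, sBit r r = r-1
        apply ZFForced.init
        show flip w k ⟨sBit r (r : ℕ), sBit_lt hr _⟩ = false
        have h1 : sBit r r = r - 1 := by
          rw [sBit_odd hodd (by obtain ⟨m, hm⟩ := hodd; omega) (by omega)]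
        have : (⟨sBit r r, sBit_lt hr _⟩ : Fin r) = k := Fin.ext (by simp [h1, hk])
        rw [this]
        simp [hw']
  | succ t ih =>
    intro ht w
    obtain ⟨m, hm⟩ := hodd
    set i : ℕ := r - 1 - 2 * (t + 1) with hi
    have hieven : i % 2 = 0 := by omega
    have hir : i + 2 ≤ r - 1 := by omega
    by_cases hw : w ⟨i, by omega⟩ = false
    · apply ZFForced.init
      show w ⟨sBit r i, sBit_lt hr _⟩ = false
      have h1 : sBit r i = i := sBit_even ⟨m, hm⟩ hieven (by omega)
      have : (⟨sBit r i, sBit_lt hr _⟩ : Fin r) = ⟨i, by omega⟩ := Fin.ext h1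
      rw [this]; exact hw
    · have hw' : w ⟨i, by omega⟩ = true := by
        revert hw; cases w ⟨i, by omega⟩ <;> simp
      set k : Fin r := ⟨i, by omega⟩ with hk
      set u : V r := (flip w k, ⟨i + 1, by omega⟩) with hu
      set v : V r := (w, ⟨i, by omega⟩) with hv
      have hFu : ZFForced (butterfly r) (S r hr) u := by
        have hj : 2 * (i / 2) + 1 ≤ r := by omega
        have := forced_odd ⟨m, hm⟩ hr (i / 2) hj (flip w k)
        have hE : ((flip w k, ⟨2 * (i/2) + 1, by omega⟩) : V r) = u :=
          Prod.ext rfl (Fin.ext (by show 2 * (i/2) + 1 = i + 1; omega))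
        rwa [hE] at this
      have hadj : (butterfly r).Adj u v := by
        rw [adj_iff]
        right
        refine ⟨by show i + 1 = i + 1; rfl, Or.inr ⟨by show i < r; omega, ?_⟩⟩
        rfl
      apply ZFForced.force (u := u) ?_ hadj
      · rintro x hx hxv
        rw [adj_iff] at hx
        have hu2 : (u.2 : ℕ) = i + 1 := rfl
        rcases hx with ⟨hl, hw1⟩ | ⟨hl, hw1⟩
        · -- x at level i+2 = r-1-2t : by ih
          have hxl : (x.2 : ℕ) = i + 2 := by omega
          have hE : x = ((x.1, ⟨r - 1 - 2 * t, by omega⟩) : V r) :=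
            Prod.ext rfl (Fin.ext (by show (x.2:ℕ) = r - 1 - 2*t; omega))
          rw [hE]
          exact ih (by omega) x.1
        · -- x at level i
          have hxl : (x.2 : ℕ) = i := by omega
          rcases hw1 with hw1 | ⟨h2, hw1⟩
          · -- u.1 = x.1 : in S
            apply ZFForced.init
            show x.1 ⟨sBit r (x.2 : ℕ), sBit_lt hr _⟩ = false
            have h1 : sBit r (x.2 : ℕ) = i := by
              rw [hxl]; exact sBit_even ⟨m, hm⟩ hieven (by omega)
            have : (⟨sBit r (x.2:ℕ), sBit_lt hr _⟩ : Fin r) = k := Fin.ext (by simp [h1, hk])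
            rw [this, ← hw1]
            simp [hu, hk, hw']
            exact hw'
          · exfalso
            apply hxv
            have hkx : (⟨(x.2 : ℕ), h2⟩ : Fin r) = k := Fin.ext (by simp [hxl, hk])
            rw [hkx] at hw1
            have hx1 : x.1 = w := by
              have h3 : flip u.1 k = x.1 := by rw [hw1, flip_flip]
              rw [← h3]
              show flip (flip w k) k = w
              rw [flip_flip]
            have hx2 : x.2 = v.2 := Fin.ext (by show (x.2:ℕ) = i; omega)
            exact Prod.ext hx1 hx2
      · exact hFu

lemma S_isZF : IsZeroForcingSet (butterfly r) (S r hr) := by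
  rintro ⟨w, i⟩
  obtain ⟨m, hm⟩ := id hodd
  have hi := i.isLt
  rcases Nat.even_or_odd (i : ℕ) with he | ho
  · obtain ⟨a, ha⟩ := he
    set t := (r - 1 - (i : ℕ)) / 2 with htd
    have hE : ((w, i) : V r) = (w, ⟨r - 1 - 2 * t, by omega⟩) :=
      Prod.ext rfl (Fin.ext (by show (i:ℕ) = r - 1 - 2 * t; omega))
    rw [hE]
    exact forced_even hodd hr t (by omega) w
  · obtain ⟨a, ha⟩ := ho
    have hE : ((w, i) : V r) = (w, ⟨2 * a + 1, by omega⟩) :=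
      Prod.ext rfl (Fin.ext (by show (i:ℕ) = 2 * a + 1; omega))
    rw [hE]
    exact forced_odd hodd hr a (by omega) w

end Forcing

lemma ZFForced_mono {W : Type*} {G : SimpleGraph W} {A T : Set W} (h : A ⊆ T) {v : W}
    (hv : ZFForced G A v) : ZFForced G T v := by
  induction hv with
  | init hv => exact ZFForced.init (h hv)
  | force hu hadj hall ihu ihall => exact ZFForced.force ihu hadj ihall

def B (r : ℕ) (hr : 0 < r) : Finset (V r) :=
  Finset.univ.filter
    (fun p => ((p.2 : ℕ) % 2 = 0 ∧ p.1 ⟨sBit r (p.2 : ℕ), sBit_lt hr _⟩ = false))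

def upv (r : ℕ) (p : V r) : V r := (p.1, ⟨min ((p.2 : ℕ) + 1) r, by omega⟩)

lemma upv_snd {r : ℕ} {p : V r} (h : (p.2 : ℕ) < r) : ((upv r p).2 : ℕ) = (p.2 : ℕ) + 1 := by
  show min ((p.2 : ℕ) + 1) r = (p.2 : ℕ) + 1
  omega

lemma mem_B_iff {r : ℕ} (hr : 0 < r) (p : V r) :
    p ∈ B r hr ↔ ((p.2 : ℕ) % 2 = 0 ∧ p.1 ⟨sBit r (p.2 : ℕ), sBit_lt hr _⟩ = false) := by
  simp [B]

lemma B_lvl_lt {r : ℕ} (hodd : Odd r) (hr : 0 < r) {p : V r} (hp : p ∈ B r hr) :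
    (p.2 : ℕ) < r := by
  obtain ⟨m, hm⟩ := hodd
  have h1 := (mem_B_iff hr p).mp hp
  have h2 := p.2.isLt
  omega

lemma cardW {r : ℕ} (hr : 0 < r) (k : Fin r) :
    (Finset.univ.filter (fun w : Fin r → Bool => w k = false)).card = 2 ^ (r - 1) := by
  classical
  have huniv : (Finset.univ : Finset (Fin r → Bool)).card = 2 ^ r := by
    simp [Finset.card_univ, Fintype.card_fun]
  have hfn : (Finset.univ.filter (fun w : Fin r → Bool => ¬ (w k = false)))
      = Finset.univ \ (Finset.univ.filter (fun w : Fin r → Bool => w k = false)) :=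
    Finset.filter_not _ _
  have hcs : (Finset.univ \ (Finset.univ.filter (fun w : Fin r → Bool => w k = false))).card
      = Finset.univ.card - (Finset.univ.filter (fun w : Fin r → Bool => w k = false)).card :=
    Finset.card_sdiff_of_subset (Finset.filter_subset _ _)
  have hle : (Finset.univ.filter (fun w : Fin r → Bool => w k = false)).card
      ≤ (Finset.univ : Finset (Fin r → Bool)).card := Finset.card_filter_le _ _
  have hbij : (Finset.univ.filter (fun w : Fin r → Bool => w k = false)).card
      = (Finset.univ.filter (fun w : Fin r → Bool => ¬ (w k = false))).card := by
    refine Finset.card_nbij' (fun w => flip w k) (fun w => flip w k) ?_ ?_ ?_ ?_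
    · intro w hw
      simp only [Finset.mem_coe, Finset.mem_filter, Finset.mem_univ, true_and] at hw ⊢
      simp [hw]
    · intro w hw
      simp only [Finset.mem_coe, Finset.mem_filter, Finset.mem_univ, true_and] at hw ⊢
      simp only [flip_self]
      revert hw; cases w k <;> simp
    · intro w _; exact flip_flip w k
    · intro w _; exact flip_flip w k
  rw [hfn, hcs, huniv] at hbij
  rw [huniv] at hle
  obtain ⟨n, hn⟩ : ∃ n, (Finset.univ.filter (fun w : Fin r → Bool => w k = false)).card = n :=
    ⟨_, rfl⟩
  rw [hn] at hbij hle ⊢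
  clear hn hfn hcs hle huniv
  have hpow : 2 ^ r = 2 ^ (r - 1) * 2 := by
    have hr1 : r - 1 + 1 = r := by omega
    conv_lhs => rw [← hr1]
    rw [pow_succ]
  omega

lemma card_B {r : ℕ} (hodd : Odd r) (hr : 0 < r) :
    (B r hr).card = (r + 1) / 2 * 2 ^ (r - 1) := by
  obtain ⟨m, hm⟩ := id hodd
  classical
  rw [Finset.card_eq_sum_card_fiberwise (f := Prod.snd) (t := Finset.univ)
    (fun _ _ => Finset.mem_univ _)]
  have hfib : ∀ i : Fin (r + 1), ((B r hr).filter (fun p => p.2 = i)).card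
      = if (i : ℕ) % 2 = 0 then 2 ^ (r - 1) else 0 := by
    intro i
    by_cases hi : (i : ℕ) % 2 = 0
    · rw [if_pos hi]
      rw [← cardW hr ⟨sBit r (i : ℕ), sBit_lt hr _⟩]
      refine Finset.card_nbij' (fun p => p.1) (fun w => (w, i)) ?_ ?_ ?_ ?_
      · intro p hp
        simp only [Finset.mem_coe, Finset.mem_filter, mem_B_iff] at hp
        obtain ⟨⟨h1, h2⟩, h3⟩ := hp
        simp only [Finset.mem_coe, Finset.mem_filter, Finset.mem_univ, true_and]
        have hE : (⟨sBit r ((p.2 : ℕ)), sBit_lt hr _⟩ : Fin r)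
            = ⟨sBit r ((i : ℕ)), sBit_lt hr _⟩ := Fin.ext (by rw [h3])
        rw [hE] at h2
        exact h2
      · intro w hw
        simp only [Finset.mem_coe, Finset.mem_filter, Finset.mem_univ, true_and] at hw
        exact Finset.mem_filter.mpr ⟨(mem_B_iff hr _).mpr ⟨hi, hw⟩, rfl⟩
      · intro p hp
        simp only [Finset.mem_coe, Finset.mem_filter] at hp
        exact Prod.ext rfl hp.2.symm
      · intro w _; rfl
    · rw [if_neg hi]
      rw [Finset.card_eq_zero, Finset.filter_eq_empty_iff]
      intro p hp hpi
      rw [mem_B_iff] at hp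
      rw [hpi] at hp
      exact hi hp.1
  rw [Finset.sum_congr rfl (fun i _ => hfib i)]
  have hsum : ∑ i : Fin (r + 1), (if (i : ℕ) % 2 = 0 then 2 ^ (r - 1) else 0)
      = ∑ i ∈ Finset.range (r + 1), (if i % 2 = 0 then 2 ^ (r - 1) else 0) :=
    Fin.sum_univ_eq_sum_range (fun i => if i % 2 = 0 then 2 ^ (r - 1) else 0) (r + 1)
  rw [hsum, ← Finset.sum_filter, Finset.sum_const, smul_eq_mul]
  have himg : (Finset.range (r + 1)).filter (fun x => x % 2 = 0)
      = (Finset.range (m + 1)).image (fun x => 2 * x) := by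
    ext x
    simp only [Finset.mem_filter, Finset.mem_image, Finset.mem_range]
    constructor
    · rintro ⟨h1, h2⟩
      exact ⟨x / 2, by omega, by omega⟩
    · rintro ⟨a, ha, rfl⟩
      omega
  rw [himg, Finset.card_image_of_injective _ (fun a b hab => by omega), Finset.card_range]
  clear hfib
  congr 1
  omega

end EFaux

open EFaux in
theorem edgeForcing_BF_odd_upper_bound (r : ℕ) (hodd : Odd r) (hr : 3 ≤ r) :
    edgeForcingNumber (butterfly r) ≤ (r + 1) / 2 * 2 ^ (r - 1) := by
  classical
  have hr0 : 0 < r := by omega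
  apply Nat.sInf_le
  refine ⟨↑((B r hr0).image (fun p => s(p, upv r p))), ⟨?_, ?_, ?_⟩, ?_⟩
  · -- subset of edgeSet
    intro e he
    simp only [Finset.coe_image, Set.mem_image, Finset.mem_coe] at he
    obtain ⟨p, hp, rfl⟩ := he
    rw [SimpleGraph.mem_edgeSet, adj_iff]
    left
    exact ⟨upv_snd (B_lvl_lt hodd hr0 hp), Or.inl rfl⟩
  · -- pairwise disjoint
    intro e he f hf hef v hve hvf
    simp only [Finset.coe_image, Set.mem_image, Finset.mem_coe] at he hf
    obtain ⟨p, hp, rfl⟩ := he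
    obtain ⟨q, hq, rfl⟩ := hf
    rw [Sym2.mem_iff] at hve hvf
    have hpl := B_lvl_lt hodd hr0 hp
    have hql := B_lvl_lt hodd hr0 hq
    have hpe := ((mem_B_iff hr0 p).mp hp).1
    have hqe := ((mem_B_iff hr0 q).mp hq).1
    have hup : ((upv r p).2 : ℕ) = (p.2 : ℕ) + 1 := upv_snd hpl
    have huq : ((upv r q).2 : ℕ) = (q.2 : ℕ) + 1 := upv_snd hql
    rcases hve with rfl | rfl
    · rcases hvf with h | h
      · exact hef (by rw [h])
      · have := congrArg (fun z : V r => (z.2 : ℕ)) h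
        simp only [huq] at this
        omega
    · rcases hvf with h | h
      · have := congrArg (fun z : V r => (z.2 : ℕ)) h
        simp only [hup] at this
        omega
      · have h1 : p.1 = q.1 := by
          have := congrArg (fun z : V r => z.1) h
          simpa [upv] using this
        have h2 : (p.2 : ℕ) = (q.2 : ℕ) := by
          have := congrArg (fun z : V r => (z.2 : ℕ)) h
          simp only [hup, huq] at this
          omega
        exact hef (by rw [show p = q from Prod.ext h1 (Fin.ext h2)])
  · -- zero forcing
    intro v
    apply ZFForced_mono ?_ (S_isZF hodd hr0 v)
    intro x hx
    have hxS : x.1 ⟨sBit r (x.2 : ℕ), sBit_lt hr0 _⟩ = false := hx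
    obtain ⟨m, hm⟩ := id hodd
    have hxl := x.2.isLt
    rcases Nat.even_or_odd (x.2 : ℕ) with he | ho
    · obtain ⟨a, ha⟩ := he
      refine ⟨s(x, upv r x), ?_, Sym2.mem_mk_left _ _⟩
      simp only [Finset.coe_image, Set.mem_image, Finset.mem_coe]
      refine ⟨x, (mem_B_iff hr0 x).mpr ⟨by omega, hxS⟩, rfl⟩
    · obtain ⟨a, ha⟩ := ho
      set p : V r := (x.1, ⟨(x.2 : ℕ) - 1, by omega⟩) with hpd
      have hps : sBit r ((p.2 : ℕ)) = (x.2 : ℕ) - 1 := by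
        show sBit r ((x.2 : ℕ) - 1) = (x.2 : ℕ) - 1
        exact sBit_even hodd (by omega) (by omega)
      have hxs : sBit r (x.2 : ℕ) = (x.2 : ℕ) - 1 := sBit_odd hodd (by omega) (by omega)
      have hpB : p ∈ B r hr0 := by
        rw [mem_B_iff]
        refine ⟨by show ((x.2 : ℕ) - 1) % 2 = 0; omega, ?_⟩
        show x.1 ⟨sBit r (p.2 : ℕ), _⟩ = false
        have hE : (⟨sBit r (p.2 : ℕ), sBit_lt hr0 _⟩ : Fin r)
            = ⟨sBit r (x.2 : ℕ), sBit_lt hr0 _⟩ := Fin.ext (by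
          show sBit r ((x.2 : ℕ) - 1) = sBit r (x.2 : ℕ)
          rw [hxs]
          exact sBit_even hodd (by omega) (by omega))
        rw [hE]; exact hxS
      have hup : upv r p = x := by
        refine Prod.ext rfl (Fin.ext ?_)
        show min ((x.2 : ℕ) - 1 + 1) r = (x.2 : ℕ)
        omega
      refine ⟨s(p, upv r p), ?_, by rw [hup]; exact Sym2.mem_mk_right _ _⟩
      simp only [Finset.coe_image, Set.mem_image, Finset.mem_coe]
      exact ⟨p, hpB, rfl⟩
  · -- cardinality
    rw [Set.ncard_coe_finset, Finset.card_image_of_injOn, card_B hodd hr0]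
    intro p hp q hq hpq
    simp only [Finset.mem_coe] at hp hq
    have hpl := B_lvl_lt hodd hr0 hp
    have hql := B_lvl_lt hodd hr0 hq
    have hpe := ((mem_B_iff hr0 p).mp hp).1
    have hqe := ((mem_B_iff hr0 q).mp hq).1
    rw [Sym2.eq_iff] at hpq
    rcases hpq with ⟨h1, _⟩ | ⟨h1, h2⟩
    · exact h1
    · exfalso
      have := congrArg (fun z : V r => (z.2 : ℕ)) h1
      simp only [upv_snd hql] at this
      omega
end

section
/- For r ≥ 3 odd, the edge-forcing number of BF(r) satisfies 2^r ≤ ζ_e(BF(r)) ≤ ⌈r/2⌉ · 2^(r-1). -/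
open SimpleGraph

namespace BFAux

/-- Flip bit `i` (as a natural number index) of a bit vector. -/
def flip {r : ℕ} (i : ℕ) (w : Fin r → Bool) : Fin r → Bool :=
  fun k => if (k : ℕ) = i then !(w k) else w k

lemma flip_flip {r : ℕ} (i : ℕ) (w : Fin r → Bool) : flip i (flip i w) = w := by
  funext k
  by_cases h : (k : ℕ) = i <;> simp [flip, h]

lemma flip_apply_eq {r : ℕ} (i : ℕ) (w : Fin r → Bool) (k : Fin r) (h : (k : ℕ) = i) :
    flip i w k = !(w k) := by simp [flip, h]

lemma flip_apply_ne {r : ℕ} (i : ℕ) (w : Fin r → Bool) (k : Fin r) (h : (k : ℕ) ≠ i) :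
    flip i w k = w k := by simp [flip, h]

lemma forall_iff_flip {r : ℕ} {v u : Fin r → Bool} {i : ℕ} :
    (∀ k : Fin r, (v k ≠ u k ↔ (k : ℕ) = i)) ↔ u = flip i v := by
  constructor
  · intro h
    funext k
    by_cases hk : (k : ℕ) = i
    · have := (h k).2 hk
      rw [flip_apply_eq i v k hk]
      cases hv : v k <;> cases hu : u k <;> simp_all
    · have : ¬ (v k ≠ u k) := fun hne => hk ((h k).1 hne)
      rw [flip_apply_ne i v k hk]
      cases hv : v k <;> cases hu : u k <;> simp_all
  · rintro rfl k
    by_cases hk : (k : ℕ) = i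
    · rw [flip_apply_eq i v k hk]
      cases v k <;> simp [hk]
    · rw [flip_apply_ne i v k hk]
      simp [hk]

lemma butterfly_adj {r : ℕ} {v u : Fin r → Bool} {i j : Fin (r + 1)} :
    (butterfly r).Adj (v, i) (u, j) ↔
      ((i : ℕ) + 1 = (j : ℕ) ∧ (u = v ∨ u = flip (i : ℕ) v)) ∨
      ((j : ℕ) + 1 = (i : ℕ) ∧ (v = u ∨ v = flip (j : ℕ) u)) := by
  rw [butterfly, fromRel_adj]
  constructor
  · rintro ⟨-, ⟨hl, h | h⟩ | ⟨hl, h | h⟩⟩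
    · exact Or.inl ⟨hl, Or.inl h.symm⟩
    · exact Or.inl ⟨hl, Or.inr (forall_iff_flip.1 h)⟩
    · exact Or.inr ⟨hl, Or.inl h.symm⟩
    · exact Or.inr ⟨hl, Or.inr (forall_iff_flip.1 h)⟩
  · have hne : ∀ {a b : Fin (r+1)}, (a : ℕ) + 1 = (b : ℕ) → ∀ (x y : Fin r → Bool),
        (x, a) ≠ (y, b) := by
      intro a b hab x y hxy
      have hab2 : a = b := congrArg Prod.snd hxy
      rw [hab2] at hab
      omega
    rintro (⟨hl, h | h⟩ | ⟨hl, h | h⟩)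
    · exact ⟨hne hl v u, Or.inl ⟨hl, Or.inl h.symm⟩⟩
    · exact ⟨hne hl v u, Or.inl ⟨hl, Or.inr (forall_iff_flip.2 h)⟩⟩
    · exact ⟨fun hxy => hne hl u v hxy.symm, Or.inr ⟨hl, Or.inl h.symm⟩⟩
    · exact ⟨fun hxy => hne hl u v hxy.symm, Or.inr ⟨hl, Or.inr (forall_iff_flip.2 h)⟩⟩


variable {r : ℕ}

/-- The upper-bound edge set: straight edges between levels `2j` and `2j+1`
for words with bit `2j` equal to `false`. -/
def KK (r : ℕ) : Set (Sym2 ((Fin r → Bool) × Fin (r + 1))) :=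
  {e | ∃ (j : ℕ) (w : Fin r → Bool) (h : 2 * j + 1 ≤ r),
    w ⟨2 * j, by omega⟩ = false ∧
    e = s((w, (⟨2 * j, by omega⟩ : Fin (r + 1))),
          (w, (⟨2 * j + 1, by omega⟩ : Fin (r + 1))))}

def SS (r : ℕ) : Set ((Fin r → Bool) × Fin (r + 1)) := {v | ∃ e ∈ KK r, v ∈ e}

lemma mem_SS_even (j : ℕ) (hj : 2 * j < r) (l : Fin (r + 1)) (hl : (l : ℕ) = 2 * j)
    (k : Fin r) (hk : (k : ℕ) = 2 * j) (w : Fin r → Bool) (hw : w k = false) :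
    (w, l) ∈ SS r := by
  refine ⟨_, ⟨j, w, by omega, ?_, rfl⟩, ?_⟩
  · rw [show (⟨2 * j, by omega⟩ : Fin r) = k from Fin.ext (by simp [hk])]; exact hw
  · rw [Sym2.mem_iff]; left; exact Prod.ext rfl (Fin.ext (by simp [hl]))

lemma mem_SS_odd (j : ℕ) (hj : 2 * j + 1 ≤ r) (l : Fin (r + 1)) (hl : (l : ℕ) = 2 * j + 1)
    (k : Fin r) (hk : (k : ℕ) = 2 * j) (w : Fin r → Bool) (hw : w k = false) :
    (w, l) ∈ SS r := by
  refine ⟨_, ⟨j, w, hj, ?_, rfl⟩, ?_⟩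
  · rw [show (⟨2 * j, by omega⟩ : Fin r) = k from Fin.ext (by simp [hk])]; exact hw
  · rw [Sym2.mem_iff]; right; exact Prod.ext rfl (Fin.ext (by simp [hl]))

lemma bool_true_of_not_false {b : Bool} (h : ¬ b = false) : b = true := by
  cases b <;> simp_all

lemma force_odd (j : ℕ) (hj : 2 * j + 1 ≤ r) :
    ∀ (l : Fin (r + 1)), (l : ℕ) = 2 * j + 1 → ∀ w : Fin r → Bool,
      ZFForced (butterfly r) (SS r) (w, l) := by
  induction j with
  | zero =>
    intro l hl w
    have hb : (0 : ℕ) < r := by omega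
    by_cases hw : w ⟨0, hb⟩ = false
    · exact .init (mem_SS_odd 0 (by omega) l (by omega) ⟨0, hb⟩ rfl w hw)
    · have hw' : w ⟨0, hb⟩ = true := bool_true_of_not_false hw
      set v := flip 0 w with hv
      have hvb : v ⟨0, hb⟩ = false := by
        rw [hv, flip_apply_eq 0 w ⟨0, hb⟩ rfl, hw']; rfl
      refine ZFForced.force (u := (v, ⟨0, by omega⟩))
        (.init (mem_SS_even 0 (by omega) _ rfl ⟨0, hb⟩ rfl v hvb)) ?_ ?_
      · rw [butterfly_adj]
        simp only [Fin.val_mk]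
        exact Or.inl ⟨by omega, Or.inr (flip_flip 0 w).symm⟩
      · rintro ⟨x1, xl⟩ hadj hxne
        rw [butterfly_adj] at hadj
        simp only [Fin.val_mk] at hadj
        rcases hadj with ⟨hxl, hx | hx⟩ | ⟨hxl, hx | hx⟩
        · -- up, x1 = v
          subst hx
          exact .init (mem_SS_odd 0 (by omega) xl (by omega) ⟨0, hb⟩ rfl v hvb)
        · -- up, x1 = flip 0 v = w : this is the target
          exfalso
          apply hxne
          have hx1 : x1 = w := by rw [hx]; exact flip_flip 0 w
          have hxl' : xl = l := Fin.ext (by omega)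
          rw [hx1, hxl']
        · omega
        · omega
  | succ j ih =>
    intro l hl w
    have hb : 2 * (j + 1) < r := by omega
    by_cases hw : w ⟨2 * (j + 1), hb⟩ = false
    · exact .init (mem_SS_odd (j + 1) (by omega) l (by omega) ⟨2 * (j + 1), hb⟩ rfl w hw)
    · have hw' : w ⟨2 * (j + 1), hb⟩ = true := bool_true_of_not_false hw
      set v := flip (2 * (j + 1)) w with hv
      have hvb : v ⟨2 * (j + 1), hb⟩ = false := by
        rw [hv, flip_apply_eq _ w ⟨2 * (j + 1), hb⟩ rfl, hw']; rfl
      refine ZFForced.force (u := (v, ⟨2 * (j + 1), by omega⟩))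
        (.init (mem_SS_even (j + 1) (by omega) _ rfl ⟨2 * (j + 1), hb⟩ rfl v hvb)) ?_ ?_
      · rw [butterfly_adj]
        simp only [Fin.val_mk]
        exact Or.inl ⟨by omega, Or.inr (flip_flip _ w).symm⟩
      · rintro ⟨x1, xl⟩ hadj hxne
        rw [butterfly_adj] at hadj
        simp only [Fin.val_mk] at hadj
        rcases hadj with ⟨hxl, hx | hx⟩ | ⟨hxl, hx | hx⟩
        · subst hx
          exact .init (mem_SS_odd (j + 1) (by omega) xl (by omega) ⟨2 * (j + 1), hb⟩ rfl v hvb)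
        · exfalso
          apply hxne
          have hx1 : x1 = w := by rw [hx]; exact flip_flip _ w
          have hxl' : xl = l := Fin.ext (by omega)
          rw [hx1, hxl']
        · -- down : level = 2j+1, use ih
          exact ih (by omega) xl (by omega) x1
        · exact ih (by omega) xl (by omega) x1

lemma force_even (m : ℕ) (hm : r = 2 * m + 1) (j : ℕ) (hj : j ≤ m) :
    ∀ (l : Fin (r + 1)), (l : ℕ) = 2 * m - 2 * j → ∀ w : Fin r → Bool,
      ZFForced (butterfly r) (SS r) (w, l) := by
  induction j with
  | zero =>
    intro l hl w
    have hb : 2 * m < r := by omega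
    by_cases hw : w ⟨2 * m, hb⟩ = false
    · exact .init (mem_SS_even m (by omega) l (by omega) ⟨2 * m, hb⟩ rfl w hw)
    · have hw' : w ⟨2 * m, hb⟩ = true := bool_true_of_not_false hw
      set v := flip (2 * m) w with hv
      have hvb : v ⟨2 * m, hb⟩ = false := by
        rw [hv, flip_apply_eq _ w ⟨2 * m, hb⟩ rfl, hw']; rfl
      refine ZFForced.force (u := (v, ⟨2 * m + 1, by omega⟩))
        (.init (mem_SS_odd m (by omega) _ rfl ⟨2 * m, hb⟩ rfl v hvb)) ?_ ?_
      · rw [butterfly_adj]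
        simp only [Fin.val_mk]
        refine Or.inr ⟨by omega, Or.inr ?_⟩
        rw [show (l : ℕ) = 2 * m from by omega]
      · rintro ⟨x1, xl⟩ hadj hxne
        rw [butterfly_adj] at hadj
        simp only [Fin.val_mk] at hadj
        rcases hadj with ⟨hxl, hx | hx⟩ | ⟨hxl, hx | hx⟩
        · exfalso; omega
        · exfalso; omega
        · -- down, v = x1
          rw [← hx]
          exact .init (mem_SS_even m (by omega) xl (by omega) ⟨2 * m, hb⟩ rfl v hvb)
        · -- down, v = flip xl x1, so x1 = flip (2m) v = w : target
          exfalso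
          apply hxne
          have hx1 : x1 = w := by
            rw [show (xl : ℕ) = 2 * m from by omega] at hx
            rw [← flip_flip (2 * m) x1, ← hx, hv, flip_flip]
          have hxl' : xl = l := Fin.ext (by omega)
          rw [hx1, hxl']
  | succ j ih =>
    intro l hl w
    have hb : 2 * m - 2 * (j + 1) < r := by omega
    set L := 2 * m - 2 * (j + 1) with hL
    have hLj : L = 2 * (m - j - 1) := by omega
    by_cases hw : w ⟨L, hb⟩ = false
    · exact .init (mem_SS_even (m - j - 1) (by omega) l (by omega) ⟨L, hb⟩ (by simp only [Fin.val_mk]; omega) w hw)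
    · have hw' : w ⟨L, hb⟩ = true := bool_true_of_not_false hw
      set v := flip L w with hv
      have hvb : v ⟨L, hb⟩ = false := by
        rw [hv, flip_apply_eq _ w ⟨L, hb⟩ rfl, hw']; rfl
      refine ZFForced.force (u := (v, ⟨L + 1, by omega⟩))
        (.init (mem_SS_odd (m - j - 1) (by omega) _ (by simp [Fin.val_mk]; omega) ⟨L, hb⟩ (by simp only [Fin.val_mk]; omega) v hvb)) ?_ ?_
      · rw [butterfly_adj]
        simp only [Fin.val_mk]
        refine Or.inr ⟨by omega, Or.inr ?_⟩
        rw [show (l : ℕ) = L from by omega]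
      · rintro ⟨x1, xl⟩ hadj hxne
        rw [butterfly_adj] at hadj
        simp only [Fin.val_mk] at hadj
        rcases hadj with ⟨hxl, hx | hx⟩ | ⟨hxl, hx | hx⟩
        · -- up, at level L + 2 = 2m - 2j : use ih
          exact ih (by omega) xl (by omega) x1
        · exact ih (by omega) xl (by omega) x1
        · -- down, v = x1
          rw [← hx]
          exact .init (mem_SS_even (m - j - 1) (by omega) xl (by omega) ⟨L, hb⟩ (by simp only [Fin.val_mk]; omega) v hvb)
        · exfalso
          apply hxne
          have hx1 : x1 = w := by
            rw [show (xl : ℕ) = L from by omega] at hx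
            rw [← flip_flip L x1, ← hx, hv, flip_flip]
          have hxl' : xl = l := Fin.ext (by omega)
          rw [hx1, hxl']

lemma SS_forces (m : ℕ) (hm : r = 2 * m + 1) :
    IsZeroForcingSet (butterfly r) (SS r) := by
  rintro ⟨w, l⟩
  rcases Nat.even_or_odd (l : ℕ) with ⟨j, hj⟩ | ⟨j, hj⟩
  · have hjm : j ≤ m := by have := l.isLt; omega
    exact force_even m hm (m - j) (by omega) l (by omega) w
  · exact force_odd j (by have := l.isLt; omega) l (by omega) w

lemma KK_sub_edgeSet : KK r ⊆ (butterfly r).edgeSet := by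
  rintro e ⟨j, w, h, hw, rfl⟩
  rw [SimpleGraph.mem_edgeSet, butterfly_adj]
  simp

lemma KK_pairwise : (KK r).Pairwise (fun e f => ∀ v, v ∈ e → v ∉ f) := by
  rintro e ⟨j, w, hj, hw, rfl⟩ f ⟨j', w', hj', hw', rfl⟩ hne v hv hv'
  rw [Sym2.mem_iff] at hv hv'
  rcases hv with rfl | rfl <;> rcases hv' with h | h <;>
    simp only [Prod.mk.injEq, Fin.mk.injEq] at h <;>
    exact hne (by obtain ⟨rfl, hab⟩ := h; obtain rfl : j = j' := (by omega); rfl)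

def bitEquiv (i : Fin r) :
    {v : Fin r → Bool // v i = false} ≃ ({k : Fin r // k ≠ i} → Bool) where
  toFun v k := v.1 k.1
  invFun u := ⟨fun k => if h : k = i then false else u ⟨k, h⟩, by simp⟩
  left_inv v := by
    apply Subtype.ext; funext k
    by_cases h : k = i
    · subst h; simp [v.2]
    · simp [h]
  right_inv u := by
    funext k
    simp [k.2]

lemma card_subtype_bit (hr : 1 ≤ r) (i : Fin r) :
    Fintype.card {v : Fin r → Bool // v i = false} = 2 ^ (r - 1) := by
  rw [Fintype.card_congr (bitEquiv i), Fintype.card_fun]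
  have h1 : Fintype.card {k : Fin r // k ≠ i} = r - 1 := by
    have := Fintype.card_subtype_compl (fun k : Fin r => k = i)
    simpa [Fintype.card_subtype_eq, Fintype.card_fin] using this
  simp [h1]

lemma KK_ncard_le (m : ℕ) (hm : r = 2 * m + 1) :
    (KK r).ncard ≤ (m + 1) * 2 ^ (r - 1) := by
  have hidx : ∀ j : Fin (m + 1), 2 * (j : ℕ) < r := fun j => by have := j.isLt; omega
  set f : (Σ _j : Fin (m + 1), {v : Fin r → Bool // v ⟨2 * (_j : ℕ), hidx _j⟩ = false})
      → Sym2 ((Fin r → Bool) × Fin (r + 1)) :=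
    fun p => s((p.2.1, (⟨2 * (p.1 : ℕ), by have := hidx p.1; omega⟩ : Fin (r + 1))),
               (p.2.1, (⟨2 * (p.1 : ℕ) + 1, by have := hidx p.1; omega⟩ : Fin (r + 1)))) with hf
  have hsub : KK r ⊆ Set.range f := by
    rintro e ⟨j, w, hj, hw, rfl⟩
    exact ⟨⟨⟨j, by omega⟩, ⟨w, hw⟩⟩, rfl⟩
  calc (KK r).ncard ≤ (Set.range f).ncard := Set.ncard_le_ncard hsub (Set.toFinite _)
    _ ≤ (Set.univ : Set _).ncard := by
        rw [← Set.image_univ]; exact Set.ncard_image_le (Set.toFinite _)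
    _ = Fintype.card (Σ _j : Fin (m + 1), {v : Fin r → Bool // v ⟨2 * (_j : ℕ), hidx _j⟩ = false}) := by
        rw [Set.ncard_univ, Nat.card_eq_fintype_card]
    _ = (m + 1) * 2 ^ (r - 1) := by
        rw [Fintype.card_sigma]
        have : ∀ j : Fin (m + 1),
            Fintype.card {v : Fin r → Bool // v ⟨2 * (j : ℕ), hidx j⟩ = false} = 2 ^ (r - 1) :=
          fun j => card_subtype_bit (by omega) _
        simp [this, Finset.sum_const, Finset.card_univ]

/-- Any zero forcing set must meet every "fort". -/
lemma fort_meets {W : Type*} (G : SimpleGraph W) (S : Set W) (F : Set W)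
    (hF : ∀ u, u ∉ F → ∀ x ∈ F, G.Adj u x → ∃ x' ∈ F, x' ≠ x ∧ G.Adj u x')
    (hzf : IsZeroForcingSet G S) (hne : F.Nonempty) : ∃ x ∈ F, x ∈ S := by
  by_contra hcon
  push_neg at hcon
  have key : ∀ v, ZFForced G S v → v ∉ F := by
    intro v hv
    induction hv with
    | init h => exact fun hvF => hcon _ hvF h
    | @force u x hu hadj hnb ihu ihnb =>
      intro hxF
      obtain ⟨x', hx'F, hx'ne, hadj'⟩ := hF u ihu x hxF hadj
      exact ihnb x' hadj' hx'ne hx'F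
  obtain ⟨x, hx⟩ := hne
  exact key x (hzf x) hx

lemma flip_ne {b : ℕ} (hb : b < r) (w : Fin r → Bool) : flip b w ≠ w := by
  intro h
  have := congrFun h ⟨b, hb⟩
  rw [flip_apply_eq b w ⟨b, hb⟩ rfl] at this
  cases w ⟨b, hb⟩ <;> simp_all

lemma adj_flip0 {u : (Fin r → Bool) × Fin (r + 1)} {x1 : Fin r → Bool}
    (h : (butterfly r).Adj u (x1, (⟨0, by omega⟩ : Fin (r + 1)))) :
    (butterfly r).Adj u (flip 0 x1, (⟨0, by omega⟩ : Fin (r + 1))) := by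
  obtain ⟨u1, ul⟩ := u
  rw [butterfly_adj] at h ⊢
  simp only [Fin.val_mk] at h ⊢
  rcases h with ⟨h1, -⟩ | ⟨h1, h2⟩
  · omega
  · refine Or.inr ⟨h1, ?_⟩
    rcases h2 with h2 | h2
    · exact Or.inr (by rw [h2, flip_flip])
    · exact Or.inl h2

lemma nbr_level0 {u1 x1 : Fin r → Bool} {ul : Fin (r + 1)}
    (h : (butterfly r).Adj (u1, ul) (x1, (⟨0, by omega⟩ : Fin (r + 1)))) :
    u1 = x1 ∨ u1 = flip 0 x1 := by
  rw [butterfly_adj] at h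
  simp only [Fin.val_mk] at h
  rcases h with ⟨h1, -⟩ | ⟨-, h2⟩
  · omega
  · exact h2

lemma adj_flipr (hr : 3 ≤ r) {u : (Fin r → Bool) × Fin (r + 1)} {x1 : Fin r → Bool}
    (h : (butterfly r).Adj u (x1, (⟨r, by omega⟩ : Fin (r + 1)))) :
    (butterfly r).Adj u (flip (r - 1) x1, (⟨r, by omega⟩ : Fin (r + 1))) := by
  obtain ⟨u1, ul⟩ := u
  rw [butterfly_adj] at h ⊢
  simp only [Fin.val_mk] at h ⊢
  rcases h with ⟨h1, h2⟩ | ⟨h1, -⟩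
  · refine Or.inl ⟨h1, ?_⟩
    have hul : (ul : ℕ) = r - 1 := by omega
    rcases h2 with h2 | h2
    · exact Or.inr (by rw [hul, h2])
    · rw [hul]
      exact Or.inl (by rw [h2, hul, flip_flip])
  · have := ul.isLt; omega

lemma nbr_levelr (hr : 3 ≤ r) {u1 x1 : Fin r → Bool} {ul : Fin (r + 1)}
    (h : (butterfly r).Adj (u1, ul) (x1, (⟨r, by omega⟩ : Fin (r + 1)))) :
    x1 = u1 ∨ x1 = flip (r - 1) u1 := by
  rw [butterfly_adj] at h
  simp only [Fin.val_mk] at h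
  rcases h with ⟨h1, h2⟩ | ⟨h1, -⟩
  · have hul : (ul : ℕ) = r - 1 := by omega
    rw [hul] at h2
    exact h2
  · have := ul.isLt; omega

/-- The fort at level 0 containing `(w,0)`. -/
def fort0 (w : Fin r → Bool) : Set ((Fin r → Bool) × Fin (r + 1)) :=
  {(w, ⟨0, by omega⟩), (flip 0 w, ⟨0, by omega⟩)}

/-- The fort at level `r` containing `(w,r)`. -/
def fortR (w : Fin r → Bool) : Set ((Fin r → Bool) × Fin (r + 1)) :=
  {(w, ⟨r, by omega⟩), (flip (r - 1) w, ⟨r, by omega⟩)}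

lemma mem_fort0 {w : Fin r → Bool} {x} :
    x ∈ fort0 w ↔ x = (w, (⟨0, by omega⟩ : Fin (r + 1))) ∨
      x = (flip 0 w, (⟨0, by omega⟩ : Fin (r + 1))) := by
  simp [fort0]

lemma mem_fortR {w : Fin r → Bool} {x} :
    x ∈ fortR w ↔ x = (w, (⟨r, by omega⟩ : Fin (r + 1))) ∨
      x = (flip (r - 1) w, (⟨r, by omega⟩ : Fin (r + 1))) := by
  simp [fortR]

lemma fort0_fort (hr : 3 ≤ r) (w : Fin r → Bool) :
    ∀ u, u ∉ fort0 w → ∀ x ∈ fort0 w, (butterfly r).Adj u x →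
      ∃ x' ∈ fort0 w, x' ≠ x ∧ (butterfly r).Adj u x' := by
  have hb : (0 : ℕ) < r := by omega
  intro u _ x hx hadj
  rcases mem_fort0.1 hx with rfl | rfl
  · refine ⟨(flip 0 w, ⟨0, by omega⟩), mem_fort0.2 (Or.inr rfl), ?_, adj_flip0 hadj⟩
    intro hcon
    exact flip_ne hb w (congrArg Prod.fst hcon)
  · refine ⟨(w, ⟨0, by omega⟩), mem_fort0.2 (Or.inl rfl), ?_, ?_⟩
    · intro hcon
      exact flip_ne hb w (congrArg Prod.fst hcon).symm
    · have := adj_flip0 (x1 := flip 0 w) hadj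
      rwa [flip_flip] at this

lemma fortR_fort (hr : 3 ≤ r) (w : Fin r → Bool) :
    ∀ u, u ∉ fortR w → ∀ x ∈ fortR w, (butterfly r).Adj u x →
      ∃ x' ∈ fortR w, x' ≠ x ∧ (butterfly r).Adj u x' := by
  have hb : r - 1 < r := by omega
  intro u _ x hx hadj
  rcases mem_fortR.1 hx with rfl | rfl
  · refine ⟨(flip (r - 1) w, ⟨r, by omega⟩), mem_fortR.2 (Or.inr rfl), ?_, adj_flipr hr hadj⟩
    intro hcon
    exact flip_ne hb w (congrArg Prod.fst hcon)
  · refine ⟨(w, ⟨r, by omega⟩), mem_fortR.2 (Or.inl rfl), ?_, ?_⟩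
    · intro hcon
      exact flip_ne hb w (congrArg Prod.fst hcon).symm
    · have := adj_flipr hr (x1 := flip (r - 1) w) hadj
      rwa [flip_flip] at this

/-- Move bit `r-1` to bit `0`, clearing bit `r-1`; injective on words with bit 0 true. -/
def gmap (hr : 3 ≤ r) (w : Fin r → Bool) : Fin r → Bool :=
  fun k => if (k : ℕ) = r - 1 then false else if (k : ℕ) = 0 then w ⟨r - 1, by omega⟩ else w k

lemma gmap_apply_last (hr : 3 ≤ r) (w : Fin r → Bool) :
    gmap hr w ⟨r - 1, by omega⟩ = false := by
  simp [gmap]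

lemma gmap_apply_zero (hr : 3 ≤ r) (w : Fin r → Bool) :
    gmap hr w ⟨0, by omega⟩ = w ⟨r - 1, by omega⟩ := by
  have h : ¬ (0 : ℕ) = r - 1 := by omega
  simp [gmap, h]

lemma gmap_apply_other (hr : 3 ≤ r) (w : Fin r → Bool) (k : Fin r)
    (h0 : (k : ℕ) ≠ 0) (h1 : (k : ℕ) ≠ r - 1) : gmap hr w k = w k := by
  simp [gmap, h0, h1]

lemma gmap_inj (hr : 3 ≤ r) {w w' : Fin r → Bool} (h1 : w ⟨0, by omega⟩ = true)
    (h2 : w' ⟨0, by omega⟩ = true) (h : gmap hr w = gmap hr w') : w = w' := by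
  funext k
  by_cases hk0 : (k : ℕ) = 0
  · have hk : k = ⟨0, by omega⟩ := Fin.ext hk0
    rw [hk, h1, h2]
  · by_cases hkr : (k : ℕ) = r - 1
    · have hc := congrFun h ⟨0, by omega⟩
      rw [gmap_apply_zero, gmap_apply_zero] at hc
      have hk : k = ⟨r - 1, by omega⟩ := Fin.ext hkr
      rw [hk]; exact hc
    · have hc := congrFun h k
      rwa [gmap_apply_other hr w k hk0 hkr, gmap_apply_other hr w' k hk0 hkr] at hc

lemma fort0_level {w : Fin r → Bool} {x} (hx : x ∈ fort0 w) : (x.2 : ℕ) = 0 := by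
  rcases mem_fort0.1 hx with rfl | rfl <;> rfl

lemma fortR_level {w : Fin r → Bool} {x} (hx : x ∈ fortR w) : (x.2 : ℕ) = r := by
  rcases mem_fortR.1 hx with rfl | rfl <;> rfl

lemma fort0_inj (hr : 3 ≤ r) {w w' : Fin r → Bool} (hw : w ⟨0, by omega⟩ = false)
    (hw' : w' ⟨0, by omega⟩ = false) {x} (hx : x ∈ fort0 w) (hx' : x ∈ fort0 w') : w = w' := by
  have hb : (0 : ℕ) < r := by omega
  have hflip : ∀ v : Fin r → Bool, flip 0 v ⟨0, hb⟩ = !(v ⟨0, hb⟩) :=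
    fun v => flip_apply_eq 0 v ⟨0, hb⟩ rfl
  rcases mem_fort0.1 hx with heq | heq <;> rcases mem_fort0.1 hx' with heq' | heq' <;>
    have hfst := congrArg Prod.fst (heq.symm.trans heq') <;> dsimp only at hfst
  · exact hfst
  · exfalso
    have hc := congrFun hfst ⟨0, hb⟩
    rw [hw, hflip, hw'] at hc
    simp at hc
  · exfalso
    have hc := congrFun hfst ⟨0, hb⟩
    rw [hflip, hw, hw'] at hc
    simp at hc
  · rw [← flip_flip 0 w, hfst, flip_flip]

lemma fortR_inj (hr : 3 ≤ r) {w w' : Fin r → Bool} (hw : w ⟨r - 1, by omega⟩ = false)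
    (hw' : w' ⟨r - 1, by omega⟩ = false) {x} (hx : x ∈ fortR w) (hx' : x ∈ fortR w') : w = w' := by
  have hb : r - 1 < r := by omega
  have hflip : ∀ v : Fin r → Bool, flip (r - 1) v ⟨r - 1, hb⟩ = !(v ⟨r - 1, hb⟩) :=
    fun v => flip_apply_eq (r - 1) v ⟨r - 1, hb⟩ rfl
  rcases mem_fortR.1 hx with heq | heq <;> rcases mem_fortR.1 hx' with heq' | heq' <;>
    have hfst := congrArg Prod.fst (heq.symm.trans heq') <;> dsimp only at hfst
  · exact hfst
  · exfalso
    have hc := congrFun hfst ⟨r - 1, hb⟩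
    rw [hw, hflip, hw'] at hc
    simp at hc
  · exfalso
    have hc := congrFun hfst ⟨r - 1, hb⟩
    rw [hflip, hw, hw'] at hc
    simp at hc
  · rw [← flip_flip (r - 1) w, hfst, flip_flip]

lemma edge_level_cases {K : Set (Sym2 ((Fin r → Bool) × Fin (r + 1)))}
    (hsub : K ⊆ (butterfly r).edgeSet) {z} (hz : z ∈ K) {p q} (hp : p ∈ z) (hq : q ∈ z) :
    p = q ∨ ((p.2 : ℕ) + 1 = (q.2 : ℕ) ∨ (q.2 : ℕ) + 1 = (p.2 : ℕ)) := by
  revert hz hp hq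
  induction z using Sym2.ind with
  | _ a b =>
    intro hz hp hq
    have hadj : (butterfly r).Adj a b := (SimpleGraph.mem_edgeSet _).1 (hsub hz)
    obtain ⟨a1, a2⟩ := a
    obtain ⟨b1, b2⟩ := b
    rw [butterfly_adj] at hadj
    rw [Sym2.mem_iff] at hp hq
    have hlev : (a2 : ℕ) + 1 = (b2 : ℕ) ∨ (b2 : ℕ) + 1 = (a2 : ℕ) := by
      rcases hadj with ⟨h, -⟩ | ⟨h, -⟩
      · exact Or.inl h
      · exact Or.inr h
    rcases hp with rfl | rfl <;> rcases hq with rfl | rfl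
    · exact Or.inl rfl
    · exact Or.inr hlev
    · exact Or.inr (Or.symm hlev)
    · exact Or.inl rfl

lemma lower_bound (hr : 3 ≤ r) (K : Set (Sym2 ((Fin r → Bool) × Fin (r + 1))))
    (hK : IsEdgeForcingSet (butterfly r) K) : 2 ^ r ≤ K.ncard := by
  obtain ⟨hsub, -, hzf⟩ := hK
  set FF : (Fin r → Bool) → Set ((Fin r → Bool) × Fin (r + 1)) :=
    fun w => if w ⟨0, by omega⟩ = false then fort0 w else fortR (gmap hr w) with hFF
  have hmeet : ∀ w : Fin r → Bool, ∃ e ∈ K, ∃ x ∈ FF w, x ∈ e := by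
    intro w
    have hfort : ∀ u, u ∉ FF w → ∀ x ∈ FF w, (butterfly r).Adj u x →
        ∃ x' ∈ FF w, x' ≠ x ∧ (butterfly r).Adj u x' := by
      by_cases h : w ⟨0, by omega⟩ = false
      · simpa [hFF, h] using fort0_fort hr w
      · simpa [hFF, h] using fortR_fort hr (gmap hr w)
    have hne : (FF w).Nonempty := by
      by_cases h : w ⟨0, by omega⟩ = false
      · exact ⟨(w, ⟨0, by omega⟩), by simp only [hFF, if_pos h]; exact mem_fort0.2 (Or.inl rfl)⟩
      · exact ⟨(gmap hr w, ⟨r, by omega⟩), by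
          simp only [hFF, if_neg h]; exact mem_fortR.2 (Or.inl rfl)⟩
    obtain ⟨x, hxF, hxS⟩ := fort_meets (butterfly r) _ (FF w) hfort hzf hne
    obtain ⟨e, heK, hxe⟩ := hxS
    exact ⟨e, heK, x, hxF, hxe⟩
  choose ee heK xx hxF hxe using hmeet
  have hinj : Function.Injective ee := by
    intro w w' heq
    have hxe' : xx w' ∈ ee w := by rw [heq]; exact hxe w'
    have hcases := edge_level_cases hsub (heK w) (hxe w) hxe'
    by_cases h : w ⟨0, by omega⟩ = false <;> by_cases h' : w' ⟨0, by omega⟩ = false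
    · have hF1 : xx w ∈ fort0 w := by simpa [hFF, h] using hxF w
      have hF2 : xx w' ∈ fort0 w' := by simpa [hFF, h'] using hxF w'
      have hl1 := fort0_level hF1
      have hl2 := fort0_level hF2
      have hxeq : xx w = xx w' := by
        rcases hcases with h | h | h
        · exact h
        · omega
        · omega
      rw [hxeq] at hF1
      exact fort0_inj hr h h' hF1 hF2
    · exfalso
      have hl1 := fort0_level (by simpa [hFF, h] using hxF w)
      have hl2 := fortR_level (by simpa [hFF, h'] using hxF w')
      rcases hcases with hc | hc | hc
      · rw [hc] at hl1; omega
      · omega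
      · omega
    · exfalso
      have hl1 := fortR_level (by simpa [hFF, h] using hxF w)
      have hl2 := fort0_level (by simpa [hFF, h'] using hxF w')
      rcases hcases with hc | hc | hc
      · rw [hc] at hl1; omega
      · omega
      · omega
    · have hF1 : xx w ∈ fortR (gmap hr w) := by simpa [hFF, h] using hxF w
      have hF2 : xx w' ∈ fortR (gmap hr w') := by simpa [hFF, h'] using hxF w'
      have hl1 := fortR_level hF1
      have hl2 := fortR_level hF2
      have hxeq : xx w = xx w' := by
        rcases hcases with hc | hc | hc
        · exact hc
        · omega
        · omega
      rw [hxeq] at hF1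
      have hg := fortR_inj hr (gmap_apply_last hr w) (gmap_apply_last hr w') hF1 hF2
      exact gmap_inj hr (bool_true_of_not_false h) (bool_true_of_not_false h') hg
  have h1 : (Set.univ : Set (Fin r → Bool)).ncard = 2 ^ r := by
    rw [Set.ncard_univ, Nat.card_eq_fintype_card, Fintype.card_fun]
    simp
  calc 2 ^ r = (ee '' Set.univ).ncard := by
        rw [Set.ncard_image_of_injective _ hinj, h1]
    _ ≤ K.ncard := Set.ncard_le_ncard (by rintro e ⟨w, -, rfl⟩; exact heK w) (Set.toFinite _)

end BFAux

theorem edgeForcing_BF_odd_bounds (r : ℕ) (hodd : Odd r) (hr : 3 ≤ r) :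
    2 ^ r ≤ edgeForcingNumber (butterfly r) ∧
      edgeForcingNumber (butterfly r) ≤ (r + 1) / 2 * 2 ^ (r - 1) := by
  obtain ⟨m, hm⟩ := hodd
  have hEFS : IsEdgeForcingSet (butterfly r) (BFAux.KK r) :=
    ⟨BFAux.KK_sub_edgeSet, BFAux.KK_pairwise, BFAux.SS_forces m hm⟩
  constructor
  · refine le_csInf ⟨(BFAux.KK r).ncard, BFAux.KK r, hEFS, rfl⟩ ?_
    rintro n ⟨K, hK, rfl⟩
    exact BFAux.lower_bound hr K hK
  · refine le_trans (Nat.sInf_le ⟨BFAux.KK r, hEFS, rfl⟩) ?_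
    have h2 : (r + 1) / 2 = m + 1 := by omega
    rw [h2]
    exact BFAux.KK_ncard_le m hm
end

section
/- For r ≥ 4 even, the edge-forcing number of BF(r) satisfies 2^r ≤ ζ_e(BF(r)) ≤ (r/2 + 2) · 2^(r-1). -/
open SimpleGraph

namespace EFB

/-- flip bit `i` (as a natural-number index). -/
def flip (r i : ℕ) (w : Fin r → Bool) : Fin r → Bool :=
  fun k => if (k : ℕ) = i then !(w k) else w k

/-- read bit `i` (as a natural-number index). -/
def get {r : ℕ} (w : Fin r → Bool) (i : ℕ) : Bool :=
  if h : i < r then w ⟨i, h⟩ else false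

lemma flip_flip (r i : ℕ) (w : Fin r → Bool) : flip r i (flip r i w) = w := by
  funext k; simp only [flip]; by_cases h : (k : ℕ) = i <;> simp [h]

lemma flip_injective (r i : ℕ) : Function.Injective (flip r i) := by
  intro a b h
  have := congrArg (flip r i) h
  rwa [flip_flip, flip_flip] at this

lemma get_flip_self {r : ℕ} (i : ℕ) (hi : i < r) (w : Fin r → Bool) :
    get (flip r i w) i = !(get w i) := by
  simp [get, flip, hi]

lemma get_flip_ne {r : ℕ} (i j : ℕ) (hij : j ≠ i) (w : Fin r → Bool) :
    get (flip r i w) j = get w j := by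
  by_cases h : j < r <;> simp [get, flip, h, hij]

lemma flip_ne {r : ℕ} (i : ℕ) (hi : i < r) (w : Fin r → Bool) : flip r i w ≠ w := by
  intro h
  have := congrArg (fun v => get v i) h
  simp only [get_flip_self i hi] at this
  exact Bool.not_ne_self (get w i) this

/-- level `i` as an element of `Fin (r+1)` (truncated). -/
def lev (r i : ℕ) : Fin (r + 1) := ⟨min i r, by omega⟩

lemma lev_coe {r i : ℕ} (h : i ≤ r) : ((lev r i : Fin (r+1)) : ℕ) = i := by
  simp [lev, min_eq_left h]

lemma eq_lev {r : ℕ} (x : Fin (r+1)) {i : ℕ} (h : (x : ℕ) = i) : x = lev r i := by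
  have hi : i ≤ r := by omega
  exact Fin.ext (by rw [lev_coe hi, h])

lemma diff_iff_flip {r : ℕ} (w v : Fin r → Bool) (i : ℕ) :
    (∀ k : Fin r, (w k ≠ v k ↔ (k : ℕ) = i)) ↔ v = flip r i w := by
  constructor
  · intro h
    funext k
    by_cases hk : (k : ℕ) = i
    · have := (h k).2 hk
      simp only [flip, hk, if_pos]
      cases hw : w k <;> cases hv : v k <;> simp_all
    · have := fun hne => hk ((h k).1 hne)
      simp only [flip, hk, if_neg, Ne, not_not] at *
      cases hw : w k <;> cases hv : v k <;> simp_all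
  · rintro rfl k
    by_cases hk : (k : ℕ) = i <;> simp [flip, hk]

lemma butterfly_adj {r : ℕ} (p q : (Fin r → Bool) × Fin (r + 1)) :
    (butterfly r).Adj p q ↔
      ((p.2 : ℕ) + 1 = (q.2 : ℕ) ∧ (q.1 = p.1 ∨ q.1 = flip r (p.2 : ℕ) p.1)) ∨
      ((q.2 : ℕ) + 1 = (p.2 : ℕ) ∧ (p.1 = q.1 ∨ p.1 = flip r (q.2 : ℕ) q.1)) := by
  rw [butterfly, fromRel_adj]
  constructor
  · rintro ⟨hne, h | h⟩
    · exact Or.inl ⟨h.1, h.2.imp Eq.symm (diff_iff_flip _ _ _).1⟩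
    · exact Or.inr ⟨h.1, h.2.imp Eq.symm (diff_iff_flip _ _ _).1⟩
  · intro h
    have hne : p ≠ q := by
      rcases h with ⟨h1, _⟩ | ⟨h1, _⟩ <;>
        · intro he; rw [he] at h1; omega
    refine ⟨hne, ?_⟩
    rcases h with ⟨h1, h2⟩ | ⟨h1, h2⟩
    · exact Or.inl ⟨h1, h2.imp Eq.symm (diff_iff_flip _ _ _).2⟩
    · exact Or.inr ⟨h1, h2.imp Eq.symm (diff_iff_flip _ _ _).2⟩

end EFB

namespace EFB

variable {r : ℕ}

/-- the xor used for the block at levels `2j, 2j+1`: bits `2j-1, 2j, r-1`. -/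
def xorW (r j : ℕ) (w : Fin r → Bool) : Bool :=
  (get w (2*j-1)).xor ((get w (2*j)).xor (get w (r-1)))

lemma xorW_flip (r j : ℕ) (hj : 1 ≤ j) (hj2 : 2*j+2 ≤ r) (i : ℕ)
    (hi : i = 2*j-1 ∨ i = 2*j ∨ i = r-1) (w : Fin r → Bool) :
    xorW r j (flip r i w) = !(xorW r j w) := by
  rcases hi with rfl | rfl | rfl
  · simp only [xorW]
    rw [get_flip_self _ (by omega), get_flip_ne _ _ (by omega), get_flip_ne _ _ (by omega)]
    cases get w (2*j-1) <;> cases get w (2*j) <;> cases get w (r-1) <;> rfl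
  · simp only [xorW]
    rw [get_flip_self _ (by omega), get_flip_ne _ _ (by omega), get_flip_ne _ _ (by omega)]
    cases get w (2*j-1) <;> cases get w (2*j) <;> cases get w (r-1) <;> rfl
  · simp only [xorW]
    rw [get_flip_self _ (by omega), get_flip_ne _ _ (by omega), get_flip_ne _ _ (by omega)]
    cases get w (2*j-1) <;> cases get w (2*j) <;> cases get w (r-1) <;> rfl

lemma card_univ_fun (r : ℕ) : (Finset.univ : Finset (Fin r → Bool)).card = 2 ^ r := by
  simp [Finset.card_univ, Fintype.card_fun]

lemma card_half (r : ℕ) (hr : 1 ≤ r) (f : (Fin r → Bool) → Bool) (i : ℕ) (hi : i < r)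
    (hf : ∀ w, f (flip r i w) = !(f w)) (b : Bool) :
    (Finset.univ.filter fun w => f w = b).card = 2 ^ (r - 1) := by
  have key : (Finset.univ.filter fun w => f w = b).card
      = (Finset.univ.filter fun w => f w = !b).card := by
    refine Finset.card_bij (fun w _ => flip r i w) ?_ ?_ ?_
    · intro a ha
      simp only [Finset.mem_filter, Finset.mem_univ, true_and] at ha ⊢
      rw [hf, ha]
    · intro a _ a' _ h
      exact flip_injective r i h
    · intro c hc
      simp only [Finset.mem_filter, Finset.mem_univ, true_and] at hc
      refine ⟨flip r i c, ?_, flip_flip r i c⟩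
      simp only [Finset.mem_filter, Finset.mem_univ, true_and]
      rw [hf, hc, Bool.not_not]
  have sum := Finset.card_filter_add_card_filter_not
      (s := (Finset.univ : Finset (Fin r → Bool))) (p := fun w => f w = b)
  have heq : (Finset.univ.filter fun a => ¬ f a = b)
      = (Finset.univ.filter fun w => f w = !b) := by
    apply Finset.filter_congr
    intro w _
    cases f w <;> cases b <;> simp
  rw [heq, card_univ_fun r] at sum
  have hpow : 2 ^ r = 2 * 2 ^ (r - 1) := by
    conv_lhs => rw [show r = (r-1)+1 by omega]
    rw [pow_succ]; ring
  omega

end EFB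

namespace EFB

abbrev BV (r : ℕ) := (Fin r → Bool) × Fin (r + 1)

def eA (r : ℕ) (w : Fin r → Bool) : Sym2 (BV r) := s((w, lev r 0), (w, lev r 1))

def eB (r j : ℕ) (w : Fin r → Bool) : Sym2 (BV r) :=
  s((w, lev r (2*j)), (w, lev r (2*j+1)))

def eC (r : ℕ) (v : Fin r → Bool) : Sym2 (BV r) :=
  s((v, lev r (r-1)), (flip r (r-1) v, lev r r))

def Kfin (r : ℕ) : Finset (Sym2 (BV r)) :=
  (Finset.univ.image (eA r)) ∪
  ((Finset.Icc 1 ((r-2)/2)).biUnion fun j =>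
    (Finset.univ.filter fun w => xorW r j w = true).image (eB r j)) ∪
  ((Finset.univ.filter fun v => xorW r ((r-2)/2) v = false).image (eC r))

lemma mem_Kfin {r : ℕ} {e : Sym2 (BV r)} :
    e ∈ Kfin r ↔ (∃ w, e = eA r w) ∨
      (∃ j w, 1 ≤ j ∧ j ≤ (r-2)/2 ∧ xorW r j w = true ∧ e = eB r j w) ∨
      (∃ v, xorW r ((r-2)/2) v = false ∧ e = eC r v) := by
  simp only [Kfin, Finset.mem_union, Finset.mem_image, Finset.mem_biUnion, Finset.mem_Icc,
    Finset.mem_filter, Finset.mem_univ, true_and]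
  constructor
  · rintro ((⟨w, hw⟩ | ⟨j, ⟨hj1, hj2⟩, w, hw, he⟩) | ⟨v, hv, he⟩)
    · exact Or.inl ⟨w, hw.symm⟩
    · exact Or.inr (Or.inl ⟨j, w, hj1, hj2, hw, he.symm⟩)
    · exact Or.inr (Or.inr ⟨v, hv, he.symm⟩)
  · rintro (⟨w, hw⟩ | ⟨j, w, hj1, hj2, hw, he⟩ | ⟨v, hv, he⟩)
    · exact Or.inl (Or.inl ⟨w, hw.symm⟩)
    · exact Or.inl (Or.inr ⟨j, ⟨hj1, hj2⟩, w, hw, he.symm⟩)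
    · exact Or.inr ⟨v, hv, he.symm⟩

lemma Kfin_card (r : ℕ) (heven : r % 2 = 0) (hr : 4 ≤ r) :
    (Kfin r).card ≤ (r / 2 + 2) * 2 ^ (r - 1) := by
  set m := (r - 2) / 2 with hm
  have h1 : (Finset.univ.image (eA r)).card ≤ 2 ^ r :=
    le_trans (Finset.card_image_le) (le_of_eq (card_univ_fun r))
  have h2 : ((Finset.Icc 1 m).biUnion fun j =>
      (Finset.univ.filter fun w => xorW r j w = true).image (eB r j)).card
      ≤ m * 2 ^ (r - 1) := by
    refine le_trans Finset.card_biUnion_le ?_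
    have hb : ∀ j ∈ Finset.Icc 1 m,
        ((Finset.univ.filter fun w => xorW r j w = true).image (eB r j)).card
          ≤ 2 ^ (r - 1) := by
      intro j hj
      simp only [Finset.mem_Icc] at hj
      exact le_trans Finset.card_image_le (le_of_eq
        (card_half r (by omega) (xorW r j) (2*j-1) (by omega)
          (xorW_flip r j hj.1 (by omega) _ (Or.inl rfl)) true))
    refine le_trans (Finset.sum_le_sum hb) ?_
    rw [Finset.sum_const, smul_eq_mul, Nat.card_Icc, Nat.add_sub_cancel]
  have h3 : ((Finset.univ.filter fun v => xorW r m v = false).image (eC r)).card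
      ≤ 2 ^ (r - 1) := by
    refine le_trans Finset.card_image_le (le_of_eq ?_)
    exact card_half r (by omega) (xorW r m) (r-1) (by omega)
      (xorW_flip r m (by omega) (by omega) _ (Or.inr (Or.inr rfl))) false
  have hpow : 2 ^ r = 2 * 2 ^ (r - 1) := by
    conv_lhs => rw [show r = (r-1)+1 by omega]
    rw [pow_succ]; ring
  have htot : (Kfin r).card ≤ 2 ^ r + m * 2 ^ (r-1) + 2 ^ (r-1) :=
    le_trans (Finset.card_union_le _ _)
      (by gcongr; exact le_trans (Finset.card_union_le _ _) (by gcongr))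
  refine le_trans htot (le_of_eq ?_)
  have hm3 : r / 2 + 2 = m + 3 := by omega
  rw [hm3, hpow]; ring

lemma adj_vert (r : ℕ) (i : ℕ) (h : i + 1 ≤ r) (w : Fin r → Bool) :
    (butterfly r).Adj (w, lev r i) (w, lev r (i+1)) := by
  rw [butterfly_adj]
  exact Or.inl ⟨by rw [lev_coe (by omega), lev_coe h], Or.inl rfl⟩

lemma adj_cross (r : ℕ) (i : ℕ) (h : i + 1 ≤ r) (w : Fin r → Bool) :
    (butterfly r).Adj (w, lev r i) (flip r i w, lev r (i+1)) := by
  rw [butterfly_adj]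
  refine Or.inl ⟨by rw [lev_coe (by omega), lev_coe h], Or.inr ?_⟩
  rw [lev_coe (by omega)]

lemma Kfin_subset_edgeSet (r : ℕ) (heven : r % 2 = 0) (hr : 4 ≤ r) :
    (↑(Kfin r) : Set (Sym2 (BV r))) ⊆ (butterfly r).edgeSet := by
  intro e he
  rw [Finset.mem_coe, mem_Kfin] at he
  rcases he with ⟨w, rfl⟩ | ⟨j, w, hj1, hj2, _, rfl⟩ | ⟨v, _, rfl⟩
  · exact (butterfly r).mem_edgeSet.2 (adj_vert r 0 (by omega) w)
  · exact (butterfly r).mem_edgeSet.2 (adj_vert r (2*j) (by omega) w)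
  · have h := adj_cross r (r-1) (by omega) v
    rw [show r - 1 + 1 = r by omega] at h
    exact (butterfly r).mem_edgeSet.2 h

end EFB

namespace EFB

lemma vne_word {r : ℕ} {w w' : Fin r → Bool} (h : w ≠ w') (x y : Fin (r+1)) :
    ((w, x) : BV r) ≠ (w', y) :=
  fun he => h (congrArg Prod.fst he)

lemma vne_lev {r : ℕ} (w w' : Fin r → Bool) {i i' : ℕ} (hi : i ≤ r) (hi' : i' ≤ r)
    (h : i ≠ i') : ((w, lev r i) : BV r) ≠ (w', lev r i') := by
  intro he
  have := congrArg (fun p : BV r => (p.2 : ℕ)) he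
  simp only [lev_coe hi, lev_coe hi'] at this
  exact h this

lemma disj_of {r : ℕ} {a b c d : BV r} (h1 : a ≠ c) (h2 : a ≠ d) (h3 : b ≠ c) (h4 : b ≠ d) :
    ∀ v, v ∈ s(a, b) → v ∉ s(c, d) := by
  intro v hv hv'
  simp only [Sym2.mem_iff] at hv hv'
  rcases hv with rfl | rfl <;> rcases hv' with h | h <;> simp_all

section disj
variable {r : ℕ} (heven : r % 2 = 0) (hr : 4 ≤ r)
include heven hr

lemma disjAA {w w' : Fin r → Bool} (h : w ≠ w') : ∀ v, v ∈ eA r w → v ∉ eA r w' :=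
  disj_of (vne_word h _ _) (vne_word h _ _) (vne_word h _ _) (vne_word h _ _)

lemma disjAB {j : ℕ} (hj1 : 1 ≤ j) (hj2 : j ≤ (r-2)/2) (w w' : Fin r → Bool) :
    ∀ v, v ∈ eA r w → v ∉ eB r j w' :=
  disj_of (vne_lev _ _ (by omega) (by omega) (by omega))
    (vne_lev _ _ (by omega) (by omega) (by omega))
    (vne_lev _ _ (by omega) (by omega) (by omega))
    (vne_lev _ _ (by omega) (by omega) (by omega))

lemma disjAC (w w' : Fin r → Bool) : ∀ v, v ∈ eA r w → v ∉ eC r w' :=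
  disj_of (vne_lev _ _ (by omega) (by omega) (by omega))
    (vne_lev _ _ (by omega) (by omega) (by omega))
    (vne_lev _ _ (by omega) (by omega) (by omega))
    (vne_lev _ _ (by omega) (by omega) (by omega))

lemma disjBB {j j' : ℕ} (hj1 : 1 ≤ j) (hj2 : j ≤ (r-2)/2) (hj1' : 1 ≤ j') (hj2' : j' ≤ (r-2)/2)
    {w w' : Fin r → Bool} (h : ¬(j = j' ∧ w = w')) :
    ∀ v, v ∈ eB r j w → v ∉ eB r j' w' := by
  by_cases hj : j = j'
  · subst hj
    have hww : w ≠ w' := fun he => h ⟨rfl, he⟩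
    exact disj_of (vne_word hww _ _) (vne_word hww _ _) (vne_word hww _ _) (vne_word hww _ _)
  · exact disj_of (vne_lev _ _ (by omega) (by omega) (by omega))
      (vne_lev _ _ (by omega) (by omega) (by omega))
      (vne_lev _ _ (by omega) (by omega) (by omega))
      (vne_lev _ _ (by omega) (by omega) (by omega))

lemma disjBC {j : ℕ} (hj1 : 1 ≤ j) (hj2 : j ≤ (r-2)/2) {w v : Fin r → Bool}
    (hw : xorW r j w = true) (hv : xorW r ((r-2)/2) v = false) :
    ∀ x, x ∈ eB r j w → x ∉ eC r v := by
  refine disj_of (vne_lev _ _ (by omega) (by omega) (by omega))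
    (vne_lev _ _ (by omega) (by omega) (by omega)) ?_
    (vne_lev _ _ (by omega) (by omega) (by omega))
  by_cases hlev : 2*j+1 = r-1
  · have hjm : j = (r-2)/2 := by omega
    subst hjm
    refine vne_word (fun he => ?_) _ _
    rw [he, hv] at hw
    exact Bool.false_ne_true hw
  · exact vne_lev _ _ (by omega) (by omega) hlev

lemma disjCC {w w' : Fin r → Bool} (h : w ≠ w') : ∀ v, v ∈ eC r w → v ∉ eC r w' :=
  disj_of (vne_word h _ _) (vne_lev _ _ (by omega) (by omega) (by omega))
    (vne_lev _ _ (by omega) (by omega) (by omega))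
    (vne_word (fun he => h (flip_injective _ _ he)) _ _)

lemma Kfin_pairwise :
    (↑(Kfin r) : Set (Sym2 (BV r))).Pairwise (fun e f => ∀ v : BV r, v ∈ e → v ∉ f) := by
  have symm : ∀ {e f : Sym2 (BV r)}, (∀ v : BV r, v ∈ e → v ∉ f) →
      (∀ v : BV r, v ∈ f → v ∉ e) := fun h v hv hv' => h v hv' hv
  intro e he f hf hef
  rw [Finset.mem_coe, mem_Kfin] at he hf
  rcases he with ⟨w, rfl⟩ | ⟨j, w, hj1, hj2, hw, rfl⟩ | ⟨w, hw, rfl⟩ <;>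
    rcases hf with ⟨w', rfl⟩ | ⟨j', w', hj1', hj2', hw', rfl⟩ | ⟨w', hw', rfl⟩
  · exact disjAA heven hr (fun h => hef (by rw [h])) 
  · exact disjAB heven hr hj1' hj2' w w'
  · exact disjAC heven hr w w'
  · exact symm (disjAB heven hr hj1 hj2 w' w)
  · exact disjBB heven hr hj1 hj2 hj1' hj2' (fun ⟨h1, h2⟩ => hef (by rw [h1, h2]))
  · exact disjBC heven hr hj1 hj2 hw hw'
  · exact symm (disjAC heven hr w' w)
  · exact symm (disjBC heven hr hj1' hj2' hw' hw)
  · exact disjCC heven hr (fun h => hef (by rw [h]))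

end disj
end EFB

namespace EFB

/-- the endpoint set of the constructed matching -/
def Sset (r : ℕ) : Set (BV r) := {v | ∃ e ∈ (↑(Kfin r) : Set (Sym2 (BV r))), v ∈ e}

section Smem
variable {r : ℕ}

lemma mem_S_A0 (w : Fin r → Bool) : (w, lev r 0) ∈ Sset r :=
  ⟨eA r w, by rw [Finset.mem_coe, mem_Kfin]; exact Or.inl ⟨w, rfl⟩, by
    simp [eA, Sym2.mem_iff]⟩

lemma mem_S_A1 (w : Fin r → Bool) : (w, lev r 1) ∈ Sset r :=
  ⟨eA r w, by rw [Finset.mem_coe, mem_Kfin]; exact Or.inl ⟨w, rfl⟩, by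
    simp [eA, Sym2.mem_iff]⟩

lemma mem_S_B {j : ℕ} (hj1 : 1 ≤ j) (hj2 : j ≤ (r-2)/2) {w : Fin r → Bool}
    (hw : xorW r j w = true) :
    (w, lev r (2*j)) ∈ Sset r ∧ (w, lev r (2*j+1)) ∈ Sset r := by
  have hmem : eB r j w ∈ (↑(Kfin r) : Set (Sym2 (BV r))) := by
    rw [Finset.mem_coe, mem_Kfin]
    exact Or.inr (Or.inl ⟨j, w, hj1, hj2, hw, rfl⟩)
  exact ⟨⟨eB r j w, hmem, by simp [eB, Sym2.mem_iff]⟩,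
    ⟨eB r j w, hmem, by simp [eB, Sym2.mem_iff]⟩⟩

lemma mem_S_C {v : Fin r → Bool} (hv : xorW r ((r-2)/2) v = false) :
    (v, lev r (r-1)) ∈ Sset r ∧ (flip r (r-1) v, lev r r) ∈ Sset r := by
  have hmem : eC r v ∈ (↑(Kfin r) : Set (Sym2 (BV r))) := by
    rw [Finset.mem_coe, mem_Kfin]
    exact Or.inr (Or.inr ⟨v, hv, rfl⟩)
  exact ⟨⟨eC r v, hmem, by simp [eC, Sym2.mem_iff]⟩,
    ⟨eC r v, hmem, by simp [eC, Sym2.mem_iff]⟩⟩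

end Smem

section transversal
variable {r : ℕ} (heven : r % 2 = 0) (hr : 4 ≤ r)
include heven hr

lemma transversal (i : ℕ) (h1 : 1 ≤ i) (h2 : i ≤ r) (u : Fin r → Bool) :
    (u, lev r i) ∈ Sset r ∨ (flip r (i-1) u, lev r i) ∈ Sset r := by
  set m := (r-2)/2 with hm
  rcases eq_or_lt_of_le h1 with h1' | h1'
  · exact Or.inl (h1' ▸ mem_S_A1 u)
  rcases eq_or_lt_of_le h2 with h2' | h2'
  · -- i = r
    rw [h2']
    cases hb : xorW r m u
    · -- u itself is a legal level-(r-1) word of a C-edge: flip is in S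
      exact Or.inr (mem_S_C (v := u) hb).2
    · -- flip r (r-1) u has xorW = false, so u = flip (flip u) is at level r in S
      left
      have hflip : xorW r m (flip r (r-1) u) = false := by
        rw [xorW_flip r m (by omega) (by omega) (r-1) (Or.inr (Or.inr rfl)), hb]
        rfl
      have := (mem_S_C hflip).2
      rwa [flip_flip] at this
  -- now 2 ≤ i ≤ r-1
  rcases eq_or_lt_of_le (show i ≤ r - 1 by omega) with hi' | hi'
  · -- i = r - 1 : level r-1 is entirely contained in S
    left
    cases hb : xorW r m u
    · exact hi' ▸ (mem_S_C hb).1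
    · have := (mem_S_B (j := m) (by omega) le_rfl hb).2
      rwa [show 2*m+1 = i by omega] at this
  -- now 2 ≤ i ≤ r-2
  rcases Nat.even_or_odd i with ⟨j, hij⟩ | ⟨j, hij⟩
  · -- i = 2 j, use block j, toggle bit i-1 = 2j-1
    have hji : i = 2*j := by omega
    have hj1 : 1 ≤ j := by omega
    have hj2 : j ≤ m := by omega
    cases hb : xorW r j u
    · right
      have hflip : xorW r j (flip r (i-1) u) = true := by
        rw [show i - 1 = 2*j-1 by omega,
          xorW_flip r j hj1 (by omega) (2*j-1) (Or.inl rfl), hb]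
        rfl
      exact hji ▸ (mem_S_B hj1 hj2 hflip).1
    · exact Or.inl (hji ▸ (mem_S_B hj1 hj2 hb).1)
  · -- i = 2 j + 1, use block j, toggle bit i-1 = 2j
    have hji : i = 2*j+1 := by omega
    have hj1 : 1 ≤ j := by omega
    have hj2 : j ≤ m := by omega
    cases hb : xorW r j u
    · right
      have hflip : xorW r j (flip r (i-1) u) = true := by
        rw [show i - 1 = 2*j by omega,
          xorW_flip r j hj1 (by omega) (2*j) (Or.inr (Or.inl rfl)), hb]
        rfl
      exact hji ▸ (mem_S_B hj1 hj2 hflip).2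
    · exact Or.inl (hji ▸ (mem_S_B hj1 hj2 hb).2)

lemma forced_level : ∀ i, i ≤ r → ∀ u : Fin r → Bool,
    ZFForced (butterfly r) (Sset r) (u, lev r i) := by
  intro i
  induction i using Nat.strong_induction_on with
  | _ i IH =>
    match i with
    | 0 => exact fun _ u => ZFForced.init (mem_S_A0 u)
    | 1 => exact fun _ u => ZFForced.init (mem_S_A1 u)
    | (k+2) =>
      intro hi u
      by_cases hS : (u, lev r (k+2)) ∈ Sset r
      · exact ZFForced.init hS
      · have hT := transversal heven hr (k+2) (by omega) hi u
        rw [show k+2-1 = k+1 by omega] at hT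
        have hflipS : (flip r (k+1) u, lev r (k+2)) ∈ Sset r := hT.resolve_left hS
        refine ZFForced.force (u := (u, lev r (k+1)))
          (IH (k+1) (by omega) (by omega) u) (adj_vert r (k+1) hi u) ?_
        intro x hadj hne
        rw [butterfly_adj] at hadj
        rcases hadj with ⟨hl, hw⟩ | ⟨hl, _⟩
        · -- x is at level k+2
          rw [lev_coe (show k+1 ≤ r by omega)] at hl hw
          have hx2 : x.2 = lev r (k+2) := eq_lev x.2 (by omega)
          rcases hw with hw | hw
          · have hw' : x.1 = u := hw
            exact absurd (Prod.ext_iff.2 ⟨hw', hx2⟩) hne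
          · rw [show x = (x.1, x.2) from rfl, hw, hx2]
            exact ZFForced.init hflipS
        · -- x is at level k
          rw [lev_coe (show k+1 ≤ r by omega)] at hl
          have hx2 : x.2 = lev r k := eq_lev x.2 (by omega)
          rw [show x = (x.1, x.2) from rfl, hx2]
          exact IH k (by omega) (by omega) x.1

lemma Kfin_zeroForcing : IsZeroForcingSet (butterfly r) (Sset r) := by
  intro v
  obtain ⟨w, i⟩ := v
  have hi : (i : ℕ) ≤ r := by omega
  have := forced_level heven hr (i : ℕ) hi w
  rwa [show lev r (i : ℕ) = i from (eq_lev i rfl).symm] at this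

end transversal
end EFB

namespace EFB

/-- a "twin fort" lemma: if every common-neighbour condition holds between `a` and `b`,
then any zero forcing set contains `a` or `b`. -/
lemma twin_mem {V : Type*} {G : SimpleGraph V} {S : Set V}
    (hZF : IsZeroForcingSet G S) {a b : V} (hab : a ≠ b)
    (h1 : ∀ u, G.Adj u a → G.Adj u b) (h2 : ∀ u, G.Adj u b → G.Adj u a) :
    a ∈ S ∨ b ∈ S := by
  by_contra hcon
  push_neg at hcon
  have key : ∀ v, ZFForced G S v → v ≠ a ∧ v ≠ b := by
    intro v hv
    induction hv with
    | init h => exact ⟨fun he => hcon.1 (he ▸ h), fun he => hcon.2 (he ▸ h)⟩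
    | force hu hadj hall ihu ihall =>
      constructor
      · rintro rfl
        exact (ihall b (h1 _ hadj) hab.symm).2 rfl
      · rintro rfl
        exact (ihall a (h2 _ hadj) hab).1 rfl
  exact (key a (hZF a)).1 rfl

section lower
variable {r : ℕ} (hr : 4 ≤ r)
include hr

lemma adj_shift_bottom (w : Fin r → Bool) (u : BV r) (h : (butterfly r).Adj u (w, lev r 0)) :
    (butterfly r).Adj u (flip r 0 w, lev r 0) := by
  rw [butterfly_adj] at h ⊢
  rw [lev_coe (show (0:ℕ) ≤ r by omega)] at h ⊢
  rcases h with ⟨h1, _⟩ | ⟨h1, h2⟩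
  · omega
  · refine Or.inr ⟨h1, ?_⟩
    rcases h2 with h2 | h2
    · exact Or.inr (by rw [h2, flip_flip])
    · exact Or.inl h2

lemma adj_shift_top (w : Fin r → Bool) (u : BV r) (h : (butterfly r).Adj u (w, lev r r)) :
    (butterfly r).Adj u (flip r (r-1) w, lev r r) := by
  rw [butterfly_adj] at h ⊢
  rw [lev_coe (le_refl r)] at h ⊢
  rcases h with ⟨h1, h2⟩ | ⟨h1, _⟩
  · have hu2 : (u.2 : ℕ) = r - 1 := by omega
    refine Or.inl ⟨h1, ?_⟩
    rw [hu2] at h2 ⊢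
    rcases h2 with h2 | h2
    · refine Or.inr ?_
      show flip r (r-1) w = flip r (r-1) u.1
      rw [show w = u.1 from h2]
    · refine Or.inl ?_
      show flip r (r-1) w = u.1
      rw [show w = flip r (r-1) u.1 from h2, flip_flip]
  · exfalso
    have := u.2.isLt
    omega

lemma level_unique {K : Set (Sym2 (BV r))} (hKE : K ⊆ (butterfly r).edgeSet)
    {e : Sym2 (BV r)} (he : e ∈ K) {x y : BV r} (hx : x ∈ e) (hy : y ∈ e)
    (hxy : x.2 = y.2) : x = y := by
  have hadj := hKE he
  induction e with
  | _ a b =>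
    rw [SimpleGraph.mem_edgeSet] at hadj
    have hlev : (a.2 : ℕ) ≠ (b.2 : ℕ) := by
      rw [butterfly_adj] at hadj
      rcases hadj with ⟨h1, _⟩ | ⟨h1, _⟩ <;> omega
    rw [Sym2.mem_iff] at hx hy
    rcases hx with rfl | rfl <;> rcases hy with rfl | rfl <;> first
      | rfl
      | (exfalso; exact hlev (congrArg Fin.val hxy))
      | (exfalso; exact hlev (congrArg Fin.val hxy.symm))

lemma lower_bound {K : Set (Sym2 (BV r))} (hK : IsEdgeForcingSet (butterfly r) K) :
    2 ^ r ≤ K.ncard := by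
  obtain ⟨hKE, _, hZF⟩ := hK
  -- bottom forts
  have hexb : ∀ w : Fin r → Bool, ∃ e, e ∈ K ∧
      ((w, lev r 0) ∈ e ∨ (flip r 0 w, lev r 0) ∈ e) := by
    intro w
    have := twin_mem hZF (a := (w, lev r 0)) (b := (flip r 0 w, lev r 0))
      (vne_word (flip_ne 0 (by omega) w).symm _ _)
      (fun u h => adj_shift_bottom hr w u h)
      (fun u h => by
        have := adj_shift_bottom hr (flip r 0 w) u h
        rwa [flip_flip] at this)
    rcases this with ⟨e, heK, hem⟩ | ⟨e, heK, hem⟩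
    · exact ⟨e, heK, Or.inl hem⟩
    · exact ⟨e, heK, Or.inr hem⟩
  have hext : ∀ w : Fin r → Bool, ∃ e, e ∈ K ∧
      ((w, lev r r) ∈ e ∨ (flip r (r-1) w, lev r r) ∈ e) := by
    intro w
    have := twin_mem hZF (a := (w, lev r r)) (b := (flip r (r-1) w, lev r r))
      (vne_word (flip_ne (r-1) (by omega) w).symm _ _)
      (fun u h => adj_shift_top hr w u h)
      (fun u h => by
        have := adj_shift_top hr (flip r (r-1) w) u h
        rwa [flip_flip] at this)
    rcases this with ⟨e, heK, hem⟩ | ⟨e, heK, hem⟩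
    · exact ⟨e, heK, Or.inl hem⟩
    · exact ⟨e, heK, Or.inr hem⟩
  choose f0 hf0K hf0m using hexb
  choose fr hfrK hfrm using hext
  set B0 : Set (Sym2 (BV r)) := {e | e ∈ K ∧ ∃ x : BV r, x ∈ e ∧ x.2 = lev r 0} with hB0
  set Br : Set (Sym2 (BV r)) := {e | e ∈ K ∧ ∃ x : BV r, x ∈ e ∧ x.2 = lev r r} with hBr
  set s0 : Set (Fin r → Bool) := {w | get w 0 = false} with hs0
  set sr : Set (Fin r → Bool) := {w | get w (r-1) = false} with hsr
  -- f0 maps s0 into B0 injectively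
  have hmaps0 : ∀ w ∈ s0, f0 w ∈ B0 := by
    intro w _
    refine ⟨hf0K w, ?_⟩
    rcases hf0m w with h | h
    · exact ⟨_, h, rfl⟩
    · exact ⟨_, h, rfl⟩
  have hmapsr : ∀ w ∈ sr, fr w ∈ Br := by
    intro w _
    refine ⟨hfrK w, ?_⟩
    rcases hfrm w with h | h
    · exact ⟨_, h, rfl⟩
    · exact ⟨_, h, rfl⟩
  have hinj0 : Set.InjOn f0 s0 := by
    intro w hw w' hw' hff
    rcases hf0m w with h | h <;> rcases hf0m w' with h' | h' <;>
      rw [hff] at h <;>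
      have := level_unique hr hKE (hf0K w') h h' rfl <;>
      have hfst := congrArg Prod.fst this
    · exact hfst
    · exfalso
      have := congrArg (fun v => get v 0) hfst
      simp only [get_flip_self 0 (show 0 < r by omega)] at this
      rw [hw, hw'] at this
      exact Bool.false_ne_true (by simpa using this)
    · exfalso
      have := congrArg (fun v => get v 0) hfst
      simp only [get_flip_self 0 (show 0 < r by omega)] at this
      rw [hw, hw'] at this
      exact Bool.false_ne_true (by simpa using this)
    · exact flip_injective _ _ hfst
  have hinjr : Set.InjOn fr sr := by
    intro w hw w' hw' hff
    rcases hfrm w with h | h <;> rcases hfrm w' with h' | h' <;>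
      rw [hff] at h <;>
      have := level_unique hr hKE (hfrK w') h h' rfl <;>
      have hfst := congrArg Prod.fst this
    · exact hfst
    · exfalso
      have := congrArg (fun v => get v (r-1)) hfst
      simp only [get_flip_self (r-1) (show r-1 < r by omega)] at this
      rw [hw, hw'] at this
      exact Bool.false_ne_true (by simpa using this)
    · exfalso
      have := congrArg (fun v => get v (r-1)) hfst
      simp only [get_flip_self (r-1) (show r-1 < r by omega)] at this
      rw [hw, hw'] at this
      exact Bool.false_ne_true (by simpa using this)
    · exact flip_injective _ _ hfst
  -- cardinalities
  have hs0card : s0.ncard = 2 ^ (r-1) := by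
    have : s0 = ↑(Finset.univ.filter fun w : Fin r → Bool => get w 0 = false) := by
      ext w; simp [hs0]
    rw [this, Set.ncard_coe_finset]
    exact card_half r (by omega) (fun w => get w 0) 0 (by omega)
      (fun w => get_flip_self 0 (by omega) w) false
  have hsrcard : sr.ncard = 2 ^ (r-1) := by
    have : sr = ↑(Finset.univ.filter fun w : Fin r → Bool => get w (r-1) = false) := by
      ext w; simp [hsr]
    rw [this, Set.ncard_coe_finset]
    exact card_half r (by omega) (fun w => get w (r-1)) (r-1) (by omega)
      (fun w => get_flip_self (r-1) (by omega) w) false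
  have hcard0 : 2 ^ (r-1) ≤ B0.ncard := by
    rw [← hs0card]
    exact Set.ncard_le_ncard_of_injOn f0 hmaps0 hinj0 (Set.toFinite _)
  have hcardr : 2 ^ (r-1) ≤ Br.ncard := by
    rw [← hsrcard]
    exact Set.ncard_le_ncard_of_injOn fr hmapsr hinjr (Set.toFinite _)
  have hdisj : Disjoint B0 Br := by
    rw [Set.disjoint_left]
    rintro e ⟨heK, x, hx, hx2⟩ ⟨_, y, hy, hy2⟩
    have hadj := hKE heK
    induction e with
    | _ a b =>
      rw [SimpleGraph.mem_edgeSet, butterfly_adj] at hadj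
      rw [Sym2.mem_iff] at hx hy
      have hx2' : (x.2 : ℕ) = 0 := by rw [hx2, lev_coe]; omega
      have hy2' : (y.2 : ℕ) = r := by rw [hy2, lev_coe (le_refl r)]
      rcases hx with rfl | rfl <;> rcases hy with rfl | rfl <;>
        rcases hadj with ⟨h1, _⟩ | ⟨h1, _⟩ <;> omega
  have hunion : B0 ∪ Br ⊆ K := by
    rintro e (⟨heK, _⟩ | ⟨heK, _⟩) <;> exact heK
  calc 2 ^ r = 2 ^ (r-1) + 2 ^ (r-1) := by
        have : 2 ^ r = 2 * 2 ^ (r - 1) := by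
          conv_lhs => rw [show r = (r-1)+1 by omega]
          rw [pow_succ]; ring
        omega
    _ ≤ B0.ncard + Br.ncard := Nat.add_le_add hcard0 hcardr
    _ = (B0 ∪ Br).ncard := (Set.ncard_union_eq hdisj (Set.toFinite _) (Set.toFinite _)).symm
    _ ≤ K.ncard := Set.ncard_le_ncard hunion (Set.toFinite _)

end lower
end EFB


theorem edgeForcing_BF_even_bounds (r : ℕ) (heven : Even r) (hr : 4 ≤ r) :
    2 ^ r ≤ edgeForcingNumber (butterfly r) ∧
      edgeForcingNumber (butterfly r) ≤ (r / 2 + 2) * 2 ^ (r - 1) := by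
  have heven' : r % 2 = 0 := Nat.even_iff.1 heven
  have hEFS : IsEdgeForcingSet (butterfly r)
      ((EFB.Kfin r : Finset (Sym2 ((Fin r → Bool) × Fin (r + 1)))) :
        Set (Sym2 ((Fin r → Bool) × Fin (r + 1)))) :=
    ⟨EFB.Kfin_subset_edgeSet r heven' hr, EFB.Kfin_pairwise heven' hr,
      EFB.Kfin_zeroForcing heven' hr⟩
  have hmem : ((EFB.Kfin r : Finset (Sym2 ((Fin r → Bool) × Fin (r + 1)))) :
      Set (Sym2 ((Fin r → Bool) × Fin (r + 1)))).ncard ∈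
      {n : ℕ | ∃ K, IsEdgeForcingSet (butterfly r) K ∧ K.ncard = n} := by
    refine ⟨_, hEFS, rfl⟩
  constructor
  · refine le_csInf ⟨_, hmem⟩ ?_
    rintro n ⟨K, hK, rfl⟩
    exact EFB.lower_bound hr hK
  · refine le_trans (Nat.sInf_le hmem) ?_
    rw [Set.ncard_coe_finset]
    exact EFB.Kfin_card r heven' hr
end

section
/- For r ≥ 5, the subgraph of BF(r) induced by the vertices at levels 0 through r-2 is isomorphic to the disjoint union of 4 copies of BF(r-2), and no edge of BF(r) between levels r-1 and r is incident to a vertex in levels 0 through r-2 other than via level r-1. -/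
open SimpleGraph

def copyIdx (b0 b1 : Bool) : Fin 4 :=
  ⟨(cond b0 1 0) + 2 * (cond b1 1 0), by cases b0 <;> cases b1 <;> decide⟩

lemma copyIdx_inj : ∀ {a b c d : Bool}, copyIdx a b = copyIdx c d → a = c ∧ b = d := by decide

lemma copyIdx_decode : ∀ c : Fin 4,
    copyIdx (decide ((c : ℕ) % 2 = 1)) (decide ((c : ℕ) / 2 = 1)) = c := by decide

lemma copyIdx_decode0 (b0 b1 : Bool) :
    decide (((copyIdx b0 b1) : ℕ) % 2 = 1) = b0 := by revert b0 b1; decide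

lemma copyIdx_decode1 (b0 b1 : Bool) :
    decide (((copyIdx b0 b1) : ℕ) / 2 = 1) = b1 := by revert b0 b1; decide

def bfToFun (r : ℕ) (hr : 5 ≤ r)
    (x : {p : (Fin r → Bool) × Fin (r + 1) | (p.2 : ℕ) ≤ r - 2}) :
    Fin 4 × ((Fin (r - 2) → Bool) × Fin (r - 2 + 1)) :=
  (copyIdx (x.1.1 ⟨r - 2, by omega⟩) (x.1.1 ⟨r - 1, by omega⟩),
    (fun k => x.1.1 ⟨(k : ℕ), by omega⟩,
     ⟨(x.1.2 : ℕ), by have := x.2; simp only [Set.mem_setOf_eq] at this; omega⟩))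

def bfInvFun (r : ℕ) (hr : 5 ≤ r)
    (y : Fin 4 × ((Fin (r - 2) → Bool) × Fin (r - 2 + 1))) :
    {p : (Fin r → Bool) × Fin (r + 1) | (p.2 : ℕ) ≤ r - 2} :=
  ⟨(fun k => if h : (k : ℕ) < r - 2 then y.2.1 ⟨(k : ℕ), h⟩
      else if (k : ℕ) = r - 2 then decide ((y.1 : ℕ) % 2 = 1)
      else decide ((y.1 : ℕ) / 2 = 1),
    ⟨(y.2.2 : ℕ), by have := y.2.2.isLt; omega⟩),
   by simp only [Set.mem_setOf_eq]; have := y.2.2.isLt; omega⟩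

lemma bf_left_inv (r : ℕ) (hr : 5 ≤ r) :
    Function.LeftInverse (bfInvFun r hr) (bfToFun r hr) := by
  rintro ⟨⟨w, i⟩, hi⟩
  apply Subtype.ext
  apply Prod.ext
  · funext k
    simp only [bfToFun, bfInvFun]
    split_ifs with h1 h2
    · congr 1
    · refine (copyIdx_decode0 _ _).trans ?_
      congr 1
      exact Fin.ext (show (r : ℕ) - 2 = (k : ℕ) from h2.symm)
    · refine (copyIdx_decode1 _ _).trans ?_
      congr 1
      refine Fin.ext (show (r : ℕ) - 1 = (k : ℕ) from ?_)
      have := k.isLt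
      omega
  · exact Fin.ext rfl

lemma bf_right_inv (r : ℕ) (hr : 5 ≤ r) :
    Function.RightInverse (bfInvFun r hr) (bfToFun r hr) := by
  rintro ⟨c, w, i⟩
  have h1 : ¬ ((r : ℕ) - 2 < r - 2) := by omega
  have h2 : ¬ ((r : ℕ) - 1 < r - 2) := by omega
  have h3 : ¬ ((r : ℕ) - 1 = r - 2) := by omega
  simp only [bfToFun, bfInvFun, dif_neg h1, dif_neg h2, if_neg h3,
    if_pos (rfl : (r : ℕ) - 2 = r - 2)]
  refine Prod.ext ?_ (Prod.ext ?_ (Fin.ext rfl))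
  · exact copyIdx_decode c
  · funext k
    simp only [dif_pos k.isLt]

lemma bf_dir1 (r : ℕ) (hr : 5 ≤ r) (w w' : Fin r → Bool) (i j : Fin (r + 1))
    (hij : (i : ℕ) + 1 = (j : ℕ)) (hj : (j : ℕ) ≤ r - 2)
    (e2 : w ⟨r - 2, by omega⟩ = w' ⟨r - 2, by omega⟩)
    (e1 : w ⟨r - 1, by omega⟩ = w' ⟨r - 1, by omega⟩)
    (h : (fun k : Fin (r - 2) => w ⟨(k : ℕ), by omega⟩) =
          (fun k : Fin (r - 2) => w' ⟨(k : ℕ), by omega⟩) ∨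
        ∀ k : Fin (r - 2), (w ⟨(k : ℕ), by omega⟩ ≠ w' ⟨(k : ℕ), by omega⟩ ↔ (k : ℕ) = (i : ℕ))) :
    w = w' ∨ ∀ k : Fin r, (w k ≠ w' k ↔ (k : ℕ) = (i : ℕ)) := by
  rcases h with h | h
  · left
    funext k
    by_cases hk : (k : ℕ) < r - 2
    · exact congrFun h ⟨(k : ℕ), hk⟩
    · by_cases hk2 : (k : ℕ) = r - 2
      · have : k = ⟨r - 2, by omega⟩ := Fin.ext hk2
        rw [this]; exact e2
      · have : k = ⟨r - 1, by omega⟩ := Fin.ext (show (k : ℕ) = r - 1 by have := k.isLt; omega)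
        rw [this]; exact e1
  · right
    intro k
    by_cases hk : (k : ℕ) < r - 2
    · exact h ⟨(k : ℕ), hk⟩
    · have hki : ¬ ((k : ℕ) = (i : ℕ)) := by omega
      have hkeq : w k = w' k := by
        by_cases hk2 : (k : ℕ) = r - 2
        · have : k = ⟨r - 2, by omega⟩ := Fin.ext hk2
          rw [this]; exact e2
        · have : k = ⟨r - 1, by omega⟩ := Fin.ext (show (k : ℕ) = r - 1 by have := k.isLt; omega)
          rw [this]; exact e1
      exact iff_of_false (by simp [hkeq]) hki

lemma bf_dir2 (r : ℕ) (hr : 5 ≤ r) (w w' : Fin r → Bool) (i j : Fin (r + 1))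
    (hij : (i : ℕ) + 1 = (j : ℕ)) (hj : (j : ℕ) ≤ r - 2)
    (h : w = w' ∨ ∀ k : Fin r, (w k ≠ w' k ↔ (k : ℕ) = (i : ℕ))) :
    (w ⟨r - 2, by omega⟩ = w' ⟨r - 2, by omega⟩ ∧ w ⟨r - 1, by omega⟩ = w' ⟨r - 1, by omega⟩) ∧
    ((fun k : Fin (r - 2) => w ⟨(k : ℕ), by omega⟩) =
        (fun k : Fin (r - 2) => w' ⟨(k : ℕ), by omega⟩) ∨
      ∀ k : Fin (r - 2), (w ⟨(k : ℕ), by omega⟩ ≠ w' ⟨(k : ℕ), by omega⟩ ↔ (k : ℕ) = (i : ℕ))) := by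
  rcases h with rfl | h
  · exact ⟨⟨rfl, rfl⟩, Or.inl rfl⟩
  · refine ⟨⟨?_, ?_⟩, Or.inr fun k => h ⟨(k : ℕ), by omega⟩⟩
    · by_contra hne
      have : (r : ℕ) - 2 = (i : ℕ) := (h ⟨r - 2, by omega⟩).mp hne
      omega
    · by_contra hne
      have : (r : ℕ) - 1 = (i : ℕ) := (h ⟨r - 1, by omega⟩).mp hne
      omega

lemma bf_adj_iff (r : ℕ) (hr : 5 ≤ r)
    (x y : {p : (Fin r → Bool) × Fin (r + 1) | (p.2 : ℕ) ≤ r - 2}) :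
    (SimpleGraph.fromRel
        (fun p q : Fin 4 × ((Fin (r - 2) → Bool) × Fin (r - 2 + 1)) =>
          p.1 = q.1 ∧ (butterfly (r - 2)).Adj p.2 q.2)).Adj
      (bfToFun r hr x) (bfToFun r hr y) ↔ (butterfly r).Adj x.1 y.1 := by
  obtain ⟨⟨w, i⟩, hi⟩ := x
  obtain ⟨⟨w', j⟩, hj⟩ := y
  simp only [Set.mem_setOf_eq] at hi hj
  simp only [bfToFun, butterfly, SimpleGraph.fromRel_adj]
  constructor
  · rintro ⟨hne, ⟨hc, -, ⟨hlev, hd⟩ | ⟨hlev, hd⟩⟩ | ⟨hc, -, ⟨hlev, hd⟩ | ⟨hlev, hd⟩⟩⟩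
    · obtain ⟨e2, e1⟩ := copyIdx_inj hc
      have hij : (i : ℕ) + 1 = (j : ℕ) := hlev
      refine ⟨?_, Or.inl ⟨hij, bf_dir1 r hr w w' i j hij hj e2 e1 hd⟩⟩
      intro h
      have : (i : ℕ) = (j : ℕ) := congrArg (fun p => ((p.2 : Fin (r+1)) : ℕ)) h
      omega
    · obtain ⟨e2, e1⟩ := copyIdx_inj hc
      have hij : (j : ℕ) + 1 = (i : ℕ) := hlev
      refine ⟨?_, Or.inr ⟨hij, bf_dir1 r hr w' w j i hij hi e2.symm e1.symm hd⟩⟩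
      intro h
      have : (i : ℕ) = (j : ℕ) := congrArg (fun p => ((p.2 : Fin (r+1)) : ℕ)) h
      omega
    · obtain ⟨e2, e1⟩ := copyIdx_inj hc
      have hij : (j : ℕ) + 1 = (i : ℕ) := hlev
      refine ⟨?_, Or.inr ⟨hij, bf_dir1 r hr w' w j i hij hi e2 e1 hd⟩⟩
      intro h
      have : (i : ℕ) = (j : ℕ) := congrArg (fun p => ((p.2 : Fin (r+1)) : ℕ)) h
      omega
    · obtain ⟨e2, e1⟩ := copyIdx_inj hc
      have hij : (i : ℕ) + 1 = (j : ℕ) := hlev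
      refine ⟨?_, Or.inl ⟨hij, bf_dir1 r hr w w' i j hij hj e2.symm e1.symm hd⟩⟩
      intro h
      have : (i : ℕ) = (j : ℕ) := congrArg (fun p => ((p.2 : Fin (r+1)) : ℕ)) h
      omega
  · rintro ⟨-, ⟨hij, hd⟩ | ⟨hij, hd⟩⟩
    · obtain ⟨⟨e2, e1⟩, hd2⟩ := bf_dir2 r hr w w' i j hij hj hd
      have hpne : ((fun k : Fin (r - 2) => w ⟨(k : ℕ), by omega⟩, (⟨(i : ℕ), by omega⟩ : Fin (r - 2 + 1))) :
            (Fin (r - 2) → Bool) × Fin (r - 2 + 1)) ≠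
          ((fun k : Fin (r - 2) => w' ⟨(k : ℕ), by omega⟩, (⟨(j : ℕ), by omega⟩ : Fin (r - 2 + 1)))) := by
        intro h
        have : (i : ℕ) = (j : ℕ) := congrArg (fun p => ((p.2 : Fin (r - 2 + 1)) : ℕ)) h
        omega
      refine ⟨?_, Or.inl ⟨by rw [e2, e1], hpne, Or.inl ⟨hij, hd2⟩⟩⟩
      intro h
      exact hpne (congrArg Prod.snd h)
    · obtain ⟨⟨e2, e1⟩, hd2⟩ := bf_dir2 r hr w' w j i hij hi hd
      have hpne : ((fun k : Fin (r - 2) => w' ⟨(k : ℕ), by omega⟩, (⟨(j : ℕ), by omega⟩ : Fin (r - 2 + 1))) :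
            (Fin (r - 2) → Bool) × Fin (r - 2 + 1)) ≠
          ((fun k : Fin (r - 2) => w ⟨(k : ℕ), by omega⟩, (⟨(i : ℕ), by omega⟩ : Fin (r - 2 + 1)))) := by
        intro h
        have : (j : ℕ) = (i : ℕ) := congrArg (fun p => ((p.2 : Fin (r - 2 + 1)) : ℕ)) h
        omega
      refine ⟨?_, Or.inr ⟨by rw [e2, e1], hpne, Or.inl ⟨hij, hd2⟩⟩⟩
      intro h
      exact hpne (congrArg Prod.snd h.symm)

theorem BF_four_copies_decomposition (r : ℕ) (hr : 5 ≤ r) :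
    Nonempty ((SimpleGraph.induce
        {p : (Fin r → Bool) × Fin (r + 1) | (p.2 : ℕ) ≤ r - 2} (butterfly r)) ≃g
      SimpleGraph.fromRel
        (fun p q : Fin 4 × ((Fin (r - 2) → Bool) × Fin (r - 2 + 1)) =>
          p.1 = q.1 ∧ (butterfly (r - 2)).Adj p.2 q.2)) ∧
    ∀ p q : (Fin r → Bool) × Fin (r + 1), (butterfly r).Adj p q →
      (p.2 : ℕ) = r - 1 → (q.2 : ℕ) = r →
        ¬ ((p.2 : ℕ) ≤ r - 2 ∨ (q.2 : ℕ) ≤ r - 2) := by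
  refine ⟨⟨⟨⟨bfToFun r hr, bfInvFun r hr, bf_left_inv r hr, bf_right_inv r hr⟩, ?_⟩⟩, ?_⟩
  · intro a b
    show (SimpleGraph.fromRel _).Adj (bfToFun r hr a) (bfToFun r hr b) ↔ _
    rw [bf_adj_iff r hr a b]
    rfl
  · intro p q _ hp hq
    omega
end
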